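/- arXiv:2002.03077 — 3 statements merged into one kernel-verified Lean document; each statement's English description precedes it below -/
import Mathlib

section
/- Let 𝓡 = (R, <, …) be a densely linearly ordered structure. Let X ⊆ R^n be a D_Σ-set of dimension d and let x ∈ R^n be a point with dim_x X = d. Then dim(X ∩ B) = proj.dim(X ∩ B) = d for every sufficiently small open box B in R^n containing x. -/
open FirstOrder Set Topology

section CommonDefs

/-- A subset of `R^n` (coded as `Fin n → R`) is definable in the structure `𝓡` (with
universe `R` and language `L`) with parameters. -/
def IsDefinable (L : FirstOrder.Language) {R : Type*} [L.Structure R] {n : ℕ}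
    (X : Set (Fin n → R)) : Prop :=
  Set.Definable (Set.univ : Set R) L X

/-- An open box in `R^n`: a product of `n` open intervals. -/
def OpenBox {R : Type*} [LT R] {n : ℕ} (B : Set (Fin n → R)) : Prop :=
  ∃ c d : Fin n → R, B = {x | ∀ i, c i < x i ∧ x i < d i}

/-- A closed box in `R^n`: a product of `n` closed intervals. -/
def ClosedBox {R : Type*} [LE R] {n : ℕ} (B : Set (Fin n → R)) : Prop :=
  ∃ c d : Fin n → R, B = {x | ∀ i, c i ≤ x i ∧ x i ≤ d i}

/-- A subset of `R` which is a finite union of points and open intervals. -/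
def FinUnionPtsIntervals {R : Type*} [Preorder R] (s : Set R) : Prop :=
  ∃ (P : Finset R) (Q : Finset (R × R)), s = ↑P ∪ ⋃ p ∈ Q, Set.Ioo p.1 p.2

/-- The fiber `X_x ⊆ R` of a set `X ⊆ R^{m+1}` over `x ∈ R^m`. -/
def fiber1 {R : Type*} {m : ℕ} (X : Set (Fin (m + 1) → R)) (x : Fin m → R) : Set R :=
  {y | Fin.snoc x y ∈ X}

/-- The fiber `X_x ⊆ R^n` of a set `X ⊆ R^{m+n}` over `x ∈ R^m`. -/
def fiberN {R : Type*} {m n : ℕ} (X : Set (Fin (m + n) → R)) (x : Fin m → R) :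
    Set (Fin n → R) :=
  {y | Fin.append x y ∈ X}

/-- The member `X_{r,s} ⊆ R^n` of a parameterized family coded by `F ⊆ R^{2+n}`. -/
def famFiber {R : Type*} {n : ℕ} (F : Set (Fin (2 + n) → R)) (r s : R) : Set (Fin n → R) :=
  {y | Fin.append ![r, s] y ∈ F}

/-- A bounded subset of `R^n`: contained in some closed box. -/
def BddSet {R : Type*} [LE R] {n : ℕ} (X : Set (Fin n → R)) : Prop :=
  ∃ c d : R, ∀ y ∈ X, ∀ i, c ≤ y i ∧ y i ≤ d

/-- A discrete subset of a topological space: each of its points is isolated. -/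
def DiscreteSet {α : Type*} [TopologicalSpace α] (S : Set α) : Prop :=
  ∀ y ∈ S, ∃ U : Set α, IsOpen U ∧ y ∈ U ∧ U ∩ S = {y}

/-- A locally finite subset: each point of the space has an open neighborhood meeting
the set in a finite set. -/
def LocFin {α : Type*} [TopologicalSpace α] (S : Set α) : Prop :=
  ∀ x : α, ∃ U : Set α, IsOpen U ∧ x ∈ U ∧ (S ∩ U).Finite

/-- `F ⊆ R^{2+n}` codes a `D_Σ`-family `{X_{r,s}}_{r>0,s>0}` of CBD subsets of `R^n`:
each fiber is closed, bounded and definable, the family is increasing in `r` and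
decreasing in `s`. -/
def IsDSigmaFamily (L : FirstOrder.Language) {R : Type*} [L.Structure R] [LinearOrder R]
    [Zero R] [TopologicalSpace R] {n : ℕ} (F : Set (Fin (2 + n) → R)) : Prop :=
  IsDefinable L F ∧
    (∀ r s : R, 0 < r → 0 < s →
      IsDefinable L (famFiber F r s) ∧ IsClosed (famFiber F r s) ∧ BddSet (famFiber F r s)) ∧
    (∀ r r' s : R, 0 < r → 0 < s → r ≤ r' → famFiber F r s ⊆ famFiber F r' s) ∧
    (∀ r s s' : R, 0 < r → 0 < s → s ≤ s' → famFiber F r s' ⊆ famFiber F r s)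

/-- A `D_Σ`-set: the union `⋃_{r>0,s>0} X_{r,s}` of a `D_Σ`-family. -/
def IsDSigma (L : FirstOrder.Language) {R : Type*} [L.Structure R] [LinearOrder R]
    [Zero R] [TopologicalSpace R] {n : ℕ} (X : Set (Fin n → R)) : Prop :=
  ∃ F : Set (Fin (2 + n) → R), IsDSigmaFamily L F ∧
    X = ⋃ (r : R) (_ : 0 < r) (s : R) (_ : 0 < s), famFiber F r s

/-- Constructible sets: finite boolean combinations of open sets. -/
inductive IsConstructibleSet {α : Type*} [TopologicalSpace α] : Set α → Prop
  | of_isOpen (s : Set α) : IsOpen s → IsConstructibleSet s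
  | compl (s : Set α) : IsConstructibleSet s → IsConstructibleSet sᶜ
  | union (s t : Set α) : IsConstructibleSet s → IsConstructibleSet t →
      IsConstructibleSet (s ∪ t)

/-- `𝓡 ⊨ DC`: every nonempty definable subset of `R` bounded above has a supremum. -/
def DCProp (L : FirstOrder.Language) (R : Type*) [L.Structure R] [Preorder R] : Prop :=
  ∀ s : Set R, IsDefinable L {v : Fin 1 → R | v 0 ∈ s} → s.Nonempty → BddAbove s →
    ∃ a : R, IsLUB s a

/-- `𝓡 ⊨ LUF₂` (locally uniform finiteness of the second kind). -/
def LUF2 (L : FirstOrder.Language) (R : Type*) [L.Structure R] [LinearOrder R]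
    [TopologicalSpace R] : Prop :=
  ∀ (m : ℕ) (X : Set (Fin (m + 1) → R)), IsDefinable L X → ∀ (a : R) (b : Fin m → R),
    ∃ N : ℕ, 0 < N ∧ ∃ p q : R, a ∈ interior (Set.Icc p q) ∧
      ∃ U : Set (Fin m → R), OpenBox U ∧ b ∈ U ∧
        ∀ x ∈ U, ∀ p' q' : R, a ∈ interior (Set.Icc p' q') → Set.Icc p' q' ⊆ Set.Icc p q →
          (fiber1 X x ∩ Set.Icc p' q').Infinite ∨ (fiber1 X x ∩ Set.Icc p' q').ncard ≤ N

/-- `𝓡 ⊨ LUF₁`: `LUF₂` with `U` always taken to be all of `R^m`. -/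
def LUF1 (L : FirstOrder.Language) (R : Type*) [L.Structure R] [LinearOrder R]
    [TopologicalSpace R] : Prop :=
  ∀ (m : ℕ) (X : Set (Fin (m + 1) → R)), IsDefinable L X → ∀ a : R,
    ∃ N : ℕ, 0 < N ∧ ∃ p q : R, a ∈ interior (Set.Icc p q) ∧
      ∀ (x : Fin m → R), ∀ p' q' : R,
        a ∈ interior (Set.Icc p' q') → Set.Icc p' q' ⊆ Set.Icc p q →
          (fiber1 X x ∩ Set.Icc p' q').Infinite ∨ (fiber1 X x ∩ Set.Icc p' q').ncard ≤ N

/-- `𝓡 ⊨ SLUF`: `LUF₁` with the interval `I` chosen independently of the definable set. -/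
def SLUF (L : FirstOrder.Language) (R : Type*) [L.Structure R] [LinearOrder R]
    [TopologicalSpace R] : Prop :=
  ∀ a : R, ∃ p q : R, a ∈ interior (Set.Icc p q) ∧
    ∀ (m : ℕ) (X : Set (Fin (m + 1) → R)), IsDefinable L X →
      ∃ N : ℕ, 0 < N ∧
        ∀ (x : Fin m → R), ∀ p' q' : R,
          a ∈ interior (Set.Icc p' q') → Set.Icc p' q' ⊆ Set.Icc p q →
            (fiber1 X x ∩ Set.Icc p' q').Infinite ∨ (fiber1 X x ∩ Set.Icc p' q').ncard ≤ N

/-- The language of the open core of `𝓡`: one `n`-ary relation symbol for each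
`𝓡`-definable open subset of `R^n`. -/
def openCoreLang (L : FirstOrder.Language) (R : Type*) [L.Structure R] [TopologicalSpace R] :
    FirstOrder.Language where
  Functions := fun _ => Empty
  Relations := fun n => { s : Set (Fin n → R) // Set.Definable (Set.univ : Set R) L s ∧ IsOpen s }

/-- The open core of `𝓡`: the structure on `R` interpreting each relation symbol by the
corresponding `𝓡`-definable open set. -/
def openCoreStructure (L : FirstOrder.Language) (R : Type*) [L.Structure R]
    [TopologicalSpace R] : (openCoreLang L R).Structure R where
  funMap := fun f _ => f.elim
  RelMap := fun s x => x ∈ s.1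

/-- A set is definable in the open core of `𝓡` if it is definable (with parameters) in the
structure generated by the `𝓡`-definable open sets. -/
def DefinableInOpenCore (L : FirstOrder.Language) (R : Type*) [L.Structure R]
    [TopologicalSpace R] {n : ℕ} (X : Set (Fin n → R)) : Prop :=
  letI := openCoreStructure L R
  Set.Definable (Set.univ : Set R) (openCoreLang L R) X

/-- The local dimension `dim_x X` of `X ⊆ R^n` at `x`, an element of `{-∞} ∪ ℕ ∪ {∞}`:
the supremum of the nonnegative integers `d` such that for every open box `B` containing
`x`, some coordinate projection of `B ∩ X` to `R^d` has nonempty interior (and `-∞` if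
some open box containing `x` misses `X`). -/
noncomputable def locDim {R : Type*} [LT R] [TopologicalSpace R] {n : ℕ}
    (X : Set (Fin n → R)) (x : Fin n → R) : WithBot ℕ∞ :=
  sSup {e : WithBot ℕ∞ | ∃ d : ℕ, e = ((d : ℕ∞) : WithBot ℕ∞) ∧
    ∀ B : Set (Fin n → R), OpenBox B → x ∈ B →
      ∃ f : Fin d → Fin n, Function.Injective f ∧
        (interior ((fun y => y ∘ f) '' (B ∩ X))).Nonempty}

/-- The dimension of `X ⊆ R^n`: the supremum of the local dimensions. -/
noncomputable def setDim {R : Type*} [LT R] [TopologicalSpace R] {n : ℕ}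
    (X : Set (Fin n → R)) : WithBot ℕ∞ :=
  ⨆ x : Fin n → R, locDim X x

/-- The projective dimension of `X ⊆ R^n`: the supremum of the nonnegative integers `d`
such that some coordinate projection of `X` to `R^d` has nonempty interior (`-∞` for the
empty set). -/
noncomputable def projDim {R : Type*} [TopologicalSpace R] {n : ℕ}
    (X : Set (Fin n → R)) : WithBot ℕ∞ :=
  sSup {e : WithBot ℕ∞ | ∃ d : ℕ, e = ((d : ℕ∞) : WithBot ℕ∞) ∧
    ∃ f : Fin d → Fin n, Function.Injective f ∧
      (interior ((fun y => y ∘ f) '' X)).Nonempty}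

/-- A subset of `R` which is a union of at most `N` open intervals. -/
def UnionAtMostOpenIntervals {R : Type*} [Preorder R] (N : ℕ) (s : Set R) : Prop :=
  ∃ Q : Finset (R × R), Q.card ≤ N ∧ s = ⋃ p ∈ Q, Set.Ioo p.1 p.2

/-- A subset of `R` which is a union of at most `N₁` points and `N₂` closed intervals. -/
def UnionAtMostPtsClosedIntervals {R : Type*} [Preorder R] (N₁ N₂ : ℕ) (s : Set R) : Prop :=
  ∃ (P : Finset R) (Q : Finset (R × R)), P.card ≤ N₁ ∧ Q.card ≤ N₂ ∧
    s = ↑P ∪ ⋃ p ∈ Q, Set.Icc p.1 p.2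

/-- A subset of `R` which is a union of at most `N₁` points and `N₂` open intervals. -/
def UnionAtMostPtsOpenIntervals {R : Type*} [Preorder R] (N₁ N₂ : ℕ) (s : Set R) : Prop :=
  ∃ (P : Finset R) (Q : Finset (R × R)), P.card ≤ N₁ ∧ Q.card ≤ N₂ ∧
    s = ↑P ∪ ⋃ p ∈ Q, Set.Ioo p.1 p.2

/-- `X ∩ B` is the graph of a continuous map defined on the coordinate-projection image
of `B` (the projection being given by the injection `f` of coordinates). -/
def IsGraphOn {R : Type*} [TopologicalSpace R] {n d : ℕ} (f : Fin d → Fin n)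
    (S : Set (Fin n → R)) (D : Set (Fin d → R)) : Prop :=
  ∃ g : (Fin d → R) → (Fin n → R), ContinuousOn g D ∧ (∀ z ∈ D, (g z) ∘ f = z) ∧ S = g '' D

end CommonDefs

section Aux

/-- The condition appearing in the definitions of `locDim` and `projDim`: some injective
coordinate projection of `X` to `R^e` has nonempty interior. -/
def ProjCond {R : Type*} [TopologicalSpace R] {n : ℕ} (X : Set (Fin n → R)) (e : ℕ) : Prop :=
  ∃ f : Fin e → Fin n, Function.Injective f ∧ (interior ((fun y => y ∘ f) '' X)).Nonempty

lemma projCond_mono {R : Type*} [TopologicalSpace R] {n : ℕ} {S T : Set (Fin n → R)}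
    (hST : S ⊆ T) {e : ℕ} (h : ProjCond S e) : ProjCond T e := by
  obtain ⟨f, hf, hne⟩ := h
  exact ⟨f, hf, hne.mono (interior_mono (Set.image_mono hST))⟩

lemma interior_image_comp_castLE_nonempty {R : Type*} [TopologicalSpace R] {n e d' : ℕ}
    (h : e ≤ d') (f : Fin d' → Fin n) (S : Set (Fin n → R))
    (hne : (interior ((fun y => y ∘ f) '' S)).Nonempty) :
    (interior ((fun y => y ∘ (f ∘ Fin.castLE h)) '' S)).Nonempty := by
  obtain ⟨z, hz⟩ := hne
  obtain ⟨u, hu, hsub⟩ := (isOpen_pi_iff'.1 isOpen_interior) z hz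
  set W : Set (Fin e → R) := {w | ∀ k, w k ∈ u (Fin.castLE h k)} with hWdef
  have hWopen : IsOpen W := by
    have : W = Set.pi Set.univ (fun k => u (Fin.castLE h k)) := by
      ext w; simp [hWdef, Set.mem_pi]
    rw [this]
    exact isOpen_set_pi Set.finite_univ (fun k _ => (hu _).1)
  have hWsub : W ⊆ (fun y => y ∘ (f ∘ Fin.castLE h)) '' S := by
    intro w hw
    have hz' : (fun j : Fin d' => if hj : (j : ℕ) < e then w ⟨j, hj⟩ else z j)
        ∈ (fun y => y ∘ f) '' S := by
      apply interior_subset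
      apply hsub
      intro j _
      by_cases hj : (j : ℕ) < e
      · simp only [hj, dif_pos]
        have hcast : Fin.castLE h ⟨(j : ℕ), hj⟩ = j := by ext; rfl
        have := hw ⟨(j : ℕ), hj⟩
        rwa [hcast] at this
      · simp only [hj, dif_neg, not_false_iff]
        exact (hu j).2
    obtain ⟨y, hyS, hyf⟩ := hz'
    refine ⟨y, hyS, ?_⟩
    funext k
    have hk : ((Fin.castLE h k : Fin d') : ℕ) < e := k.2
    have := congrFun hyf (Fin.castLE h k)
    simp only at this
    calc y (f (Fin.castLE h k)) = if hj : ((Fin.castLE h k : Fin d') : ℕ) < e then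
          w ⟨(Fin.castLE h k : Fin d'), hj⟩ else z (Fin.castLE h k) := this
      _ = w k := by
          rw [dif_pos hk]
          congr 1
  have hmem : (z ∘ Fin.castLE h) ∈ W := fun k => (hu (Fin.castLE h k)).2
  exact ⟨z ∘ Fin.castLE h, interior_maximal hWsub hWopen hmem⟩

lemma projCond_of_le {R : Type*} [TopologicalSpace R] {n : ℕ} {S : Set (Fin n → R)}
    {e d' : ℕ} (h : e ≤ d') (hP : ProjCond S d') : ProjCond S e := by
  obtain ⟨f, hf, hne⟩ := hP
  exact ⟨f ∘ Fin.castLE h, hf.comp (Fin.castLE_injective h),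
    interior_image_comp_castLE_nonempty h f S hne⟩

lemma OpenBox.inter' {R : Type*} [LinearOrder R] {n : ℕ} {B B' : Set (Fin n → R)}
    (hB : OpenBox B) (hB' : OpenBox B') : OpenBox (B ∩ B') := by
  obtain ⟨c, e, rfl⟩ := hB; obtain ⟨c', e', rfl⟩ := hB'
  refine ⟨fun i => max (c i) (c' i), fun i => min (e i) (e' i), ?_⟩
  ext z
  simp only [Set.mem_inter_iff, Set.mem_setOf_eq, max_lt_iff, lt_min_iff]
  exact ⟨fun ⟨h1, h2⟩ i => ⟨⟨(h1 i).1, (h2 i).1⟩, (h1 i).2, (h2 i).2⟩,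
    fun h => ⟨fun i => ⟨(h i).1.1, (h i).2.1⟩, fun i => ⟨(h i).1.2, (h i).2.2⟩⟩⟩

end Aux

/-- Let `𝓡` be a densely linearly ordered structure, `X ⊆ R^n` a
`D_Σ`-set of dimension `d` and `x` a point with `dim_x X = d`. Then
`dim (X ∩ B) = proj.dim (X ∩ B) = d` for every sufficiently small open box `B ∋ x`. -/
theorem dim_eq_projDim_on_small_boxes
    {R : Type*} (L : FirstOrder.Language) [L.Structure R]
    [LinearOrder R] [DenselyOrdered R] [Zero R] [TopologicalSpace R] [OrderTopology R]
    (hlt : IsDefinable L {v : Fin 2 → R | v 0 < v 1})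
    {n d : ℕ} (X : Set (Fin n → R)) (hX : IsDSigma L X)
    (hdim : setDim X = ((d : ℕ∞) : WithBot ℕ∞))
    (x : Fin n → R) (hx : locDim X x = ((d : ℕ∞) : WithBot ℕ∞)) :
    ∃ B₀ : Set (Fin n → R), OpenBox B₀ ∧ x ∈ B₀ ∧
      ∀ B : Set (Fin n → R), OpenBox B → x ∈ B → B ⊆ B₀ →
        setDim (X ∩ B) = ((d : ℕ∞) : WithBot ℕ∞) ∧
        projDim (X ∩ B) = ((d : ℕ∞) : WithBot ℕ∞) := by
  -- Reformulate the local dimension hypothesis.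
  have hx' : sSup {e : WithBot ℕ∞ | ∃ d' : ℕ, e = ((d' : ℕ∞) : WithBot ℕ∞) ∧
      ∀ B : Set (Fin n → R), OpenBox B → x ∈ B → ProjCond (B ∩ X) d'} =
      ((d : ℕ∞) : WithBot ℕ∞) := hx
  -- `ProjCond (B ∩ X) d` holds for every open box `B ∋ x`.
  have hPd : ∀ B : Set (Fin n → R), OpenBox B → x ∈ B → ProjCond (B ∩ X) d := by
    by_contra hc
    push_neg at hc
    obtain ⟨B1, hB1, hxB1, hnc⟩ := hc
    have hlt : ∀ d' : ℕ,
        (∀ B : Set (Fin n → R), OpenBox B → x ∈ B → ProjCond (B ∩ X) d') → d' < d := by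
      intro d' hP
      by_contra hge
      push_neg at hge
      exact hnc (projCond_of_le hge (hP B1 hB1 hxB1))
    rcases Nat.eq_zero_or_pos d with hd0 | hdpos
    · have hbot : sSup {e : WithBot ℕ∞ | ∃ d' : ℕ, e = ((d' : ℕ∞) : WithBot ℕ∞) ∧
          ∀ B : Set (Fin n → R), OpenBox B → x ∈ B → ProjCond (B ∩ X) d'} ≤ ⊥ := by
        apply sSup_le
        rintro e ⟨d', rfl, hP⟩
        exact absurd (hlt d' hP) (by omega)
      rw [hx'] at hbot
      simp at hbot
    · have hsup : sSup {e : WithBot ℕ∞ | ∃ d' : ℕ, e = ((d' : ℕ∞) : WithBot ℕ∞) ∧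
          ∀ B : Set (Fin n → R), OpenBox B → x ∈ B → ProjCond (B ∩ X) d'} ≤
          (((d - 1 : ℕ) : ℕ∞) : WithBot ℕ∞) := by
        apply sSup_le
        rintro e ⟨d', rfl, hP⟩
        have := hlt d' hP
        exact_mod_cast (by omega : d' ≤ d - 1)
      rw [hx'] at hsup
      have : d ≤ d - 1 := by exact_mod_cast hsup
      omega
  -- There is a box `B₀ ∋ x` on which `ProjCond` fails for `d + 1`.
  have hnP : ¬ ∀ B : Set (Fin n → R), OpenBox B → x ∈ B → ProjCond (B ∩ X) (d + 1) := by
    intro hP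
    have : (((d + 1 : ℕ) : ℕ∞) : WithBot ℕ∞) ≤ ((d : ℕ∞) : WithBot ℕ∞) := by
      rw [← hx']
      exact le_sSup ⟨d + 1, rfl, hP⟩
    have : d + 1 ≤ d := by exact_mod_cast this
    omega
  push_neg at hnP
  obtain ⟨B₀, hB₀box, hxB₀, hB₀⟩ := hnP
  refine ⟨B₀, hB₀box, hxB₀, fun B hBbox hxB hBsub => ?_⟩
  -- key upper bound for membership elements
  have hub : ∀ d' : ℕ, ProjCond (X ∩ B) d' → d' ≤ d := by
    intro d' hP
    by_contra hlt
    push_neg at hlt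
    have h1 : ProjCond (X ∩ B) (d + 1) := projCond_of_le hlt hP
    exact hB₀ (projCond_mono (show X ∩ B ⊆ B₀ ∩ X from fun z hz => ⟨hBsub hz.2, hz.1⟩) h1)
  -- `ProjCond (X ∩ B) d` holds.
  have hPB : ProjCond (X ∩ B) d := by
    have := hPd B hBbox hxB
    exact projCond_mono (by rw [Set.inter_comm]) this
  constructor
  · -- setDim (X ∩ B) = d
    apply le_antisymm
    · -- upper bound: locDim (X ∩ B) y ≤ locDim X y ≤ setDim X = d
      apply iSup_le
      intro y
      have hmono : locDim (X ∩ B) y ≤ locDim X y := by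
        apply sSup_le_sSup
        rintro e ⟨d', rfl, hcond⟩
        refine ⟨d', rfl, fun B'' hB'' hyB'' => ?_⟩
        exact projCond_mono (show B'' ∩ (X ∩ B) ⊆ B'' ∩ X from fun z hz => ⟨hz.1, hz.2.1⟩) (hcond B'' hB'' hyB'')
      calc locDim (X ∩ B) y ≤ locDim X y := hmono
        _ ≤ setDim X := le_iSup (fun z => locDim X z) y
        _ = ((d : ℕ∞) : WithBot ℕ∞) := hdim
    · -- lower bound via locDim at x
      have hloc : ((d : ℕ∞) : WithBot ℕ∞) ≤ locDim (X ∩ B) x := by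
        apply le_sSup
        refine ⟨d, rfl, fun B'' hB'' hxB'' => ?_⟩
        have hbox : OpenBox (B'' ∩ B) := OpenBox.inter' hB'' hBbox
        have hx2 : x ∈ B'' ∩ B := ⟨hxB'', hxB⟩
        have := hPd (B'' ∩ B) hbox hx2
        exact projCond_mono (show (B'' ∩ B) ∩ X ⊆ B'' ∩ (X ∩ B) from fun z hz => ⟨hz.1.1, hz.2, hz.1.2⟩) this
      exact hloc.trans (le_iSup (fun z => locDim (X ∩ B) z) x)
  · -- projDim (X ∩ B) = d
    apply le_antisymm
    · apply sSup_le
      rintro e ⟨d', rfl, f, hf, hne⟩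
      have : d' ≤ d := hub d' ⟨f, hf, hne⟩
      exact_mod_cast this
    · exact le_sSup ⟨d, rfl, hPB⟩
end

section
/- Let 𝓡 = (R, <, +, 0, …) be an expansion of a densely linearly ordered abelian group with 𝓡 ⊨ DC. A CBD set X ⊆ R^{n+1} has nonempty interior if, for some s > 0, the CBD set {x ∈ R^n : the fiber X_x contains a closed interval of length s} has nonempty interior. -/
open FirstOrder Set Topology

section AuxDev

section DefnAux

variable {R : Type*} {L : FirstOrder.Language} [L.Structure R]

local notation "Dfn" => Set.Definable (Set.univ : Set R) L

lemma dfn_exists_block {γ : Type*} {m : ℕ} {s : Set ((γ ⊕ Fin m) → R)} (h : Dfn s) :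
    Dfn {v : γ → R | ∃ w : Fin m → R, Sum.elim v w ∈ s} := by
  have h2 := h.image_comp_sumInl_fin m
  convert h2 using 1
  ext v
  simp only [mem_setOf_eq, Set.mem_image]
  constructor
  · rintro ⟨w, hw⟩
    exact ⟨Sum.elim v w, hw, rfl⟩
  · rintro ⟨f, hf, rfl⟩
    refine ⟨f ∘ Sum.inr, ?_⟩
    rwa [Sum.elim_comp_inl_inr]

lemma dfn_forall_block {γ : Type*} {m : ℕ} {s : Set ((γ ⊕ Fin m) → R)} (h : Dfn s) :
    Dfn {v : γ → R | ∀ w : Fin m → R, Sum.elim v w ∈ s} := by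
  have h2 := (dfn_exists_block h.compl).compl
  convert h2 using 1
  ext v
  simp [mem_setOf_eq]

lemma dfn_iInter {γ : Type*} {m : ℕ} {f : Fin m → Set (γ → R)} (h : ∀ i, Dfn (f i)) :
    Dfn (⋂ i, f i) := by
  have h2 := Set.definable_finset_inf h Finset.univ
  convert h2 using 1
  simp

lemma dfn_reindex {γ β : Type*} (f : γ → β) {s : Set (γ → R)} (h : Dfn s) :
    Dfn {v : β → R | v ∘ f ∈ s} :=
  h.preimage_comp f

lemma dfn_eq_const {γ : Type*} (i : γ) (a : R) : Dfn {v : γ → R | v i = a} := by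
  refine ⟨Language.Term.equal (FirstOrder.Language.Term.var i)
    ((L.con (⟨a, Set.mem_univ a⟩ : (Set.univ : Set R))).term), ?_⟩
  ext v
  simp [Language.Formula.realize_equal, Language.Term.realize_con]

section Order
variable [LT R] (hlt : Set.Definable (Set.univ : Set R) L {v : Fin 2 → R | v 0 < v 1})
include hlt

lemma dfn_lt {γ : Type*} (i j : γ) : Dfn {v : γ → R | v i < v j} :=
  dfn_reindex (![i, j] : Fin 2 → γ) hlt

lemma dfn_lt_const {γ : Type*} (i : γ) (a : R) : Dfn {v : γ → R | v i < a} := by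
  have h2 := dfn_exists_block (m := 1)
    ((dfn_lt hlt (γ := γ ⊕ Fin 1) (Sum.inl i) (Sum.inr 0)).inter
      (dfn_eq_const (Sum.inr 0) a))
  have e : {v : γ → R | v i < a} = {v : γ → R | ∃ w : Fin 1 → R,
      Sum.elim v w ∈ {u : γ ⊕ Fin 1 → R | u (Sum.inl i) < u (Sum.inr 0)} ∩
        {u : γ ⊕ Fin 1 → R | u (Sum.inr 0) = a}} := by
    ext v
    simp only [mem_setOf_eq, mem_inter_iff, Sum.elim_inl, Sum.elim_inr]
    exact ⟨fun h => ⟨fun _ => a, h, rfl⟩, fun ⟨w, h1, h2⟩ => h2 ▸ h1⟩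
  rw [e]; exact h2

lemma dfn_const_lt {γ : Type*} (a : R) (i : γ) : Dfn {v : γ → R | a < v i} := by
  have h2 := dfn_exists_block (m := 1)
    ((dfn_lt hlt (γ := γ ⊕ Fin 1) (Sum.inr 0) (Sum.inl i)).inter
      (dfn_eq_const (Sum.inr 0) a))
  have e : {v : γ → R | a < v i} = {v : γ → R | ∃ w : Fin 1 → R,
      Sum.elim v w ∈ {u : γ ⊕ Fin 1 → R | u (Sum.inr 0) < u (Sum.inl i)} ∩
        {u : γ ⊕ Fin 1 → R | u (Sum.inr 0) = a}} := by
    ext v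
    simp only [mem_setOf_eq, mem_inter_iff, Sum.elim_inl, Sum.elim_inr]
    exact ⟨fun h => ⟨fun _ => a, h, rfl⟩, fun ⟨w, h1, h2⟩ => h2 ▸ h1⟩
  rw [e]; exact h2

end Order

section LinOrder
variable [LinearOrder R]
    (hlt : Set.Definable (Set.univ : Set R) L {v : Fin 2 → R | v 0 < v 1})
include hlt

lemma dfn_le {γ : Type*} (i j : γ) : Dfn {v : γ → R | v i ≤ v j} := by
  have h2 := (dfn_lt hlt j i).compl
  have e : {v : γ → R | v i ≤ v j} = {v : γ → R | v j < v i}ᶜ := by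
    ext v; simp [mem_setOf_eq]
  rw [e]; exact h2

lemma dfn_le_const {γ : Type*} (i : γ) (a : R) : Dfn {v : γ → R | v i ≤ a} := by
  have h2 := (dfn_const_lt hlt a i).compl
  have e : {v : γ → R | v i ≤ a} = {v : γ → R | a < v i}ᶜ := by
    ext v; simp [mem_setOf_eq]
  rw [e]; exact h2

lemma dfn_const_le {γ : Type*} (a : R) (i : γ) : Dfn {v : γ → R | a ≤ v i} := by
  have h2 := (dfn_lt_const hlt i a).compl
  have e : {v : γ → R | a ≤ v i} = {v : γ → R | v i < a}ᶜ := by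
    ext v; simp [mem_setOf_eq]
  rw [e]; exact h2

end LinOrder

section Add
variable [Add R]
    (hadd : Set.Definable (Set.univ : Set R) L {v : Fin 3 → R | v 0 + v 1 = v 2})
include hadd

lemma dfn_add {γ : Type*} (i j k : γ) : Dfn {v : γ → R | v i + v j = v k} :=
  dfn_reindex (![i, j, k] : Fin 3 → γ) hadd

lemma dfn_add_const {γ : Type*} (i : γ) (a : R) (j : γ) :
    Dfn {v : γ → R | v i + a = v j} := by
  have h2 := dfn_exists_block (m := 1)
    ((dfn_add hadd (γ := γ ⊕ Fin 1) (Sum.inl i) (Sum.inr 0) (Sum.inl j)).inter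
      (dfn_eq_const (Sum.inr 0) a))
  have e : {v : γ → R | v i + a = v j} = {v : γ → R | ∃ w : Fin 1 → R,
      Sum.elim v w ∈ {u : γ ⊕ Fin 1 → R | u (Sum.inl i) + u (Sum.inr 0) = u (Sum.inl j)} ∩
        {u : γ ⊕ Fin 1 → R | u (Sum.inr 0) = a}} := by
    ext v
    simp only [mem_setOf_eq, mem_inter_iff, Sum.elim_inl, Sum.elim_inr]
    exact ⟨fun h => ⟨fun _ => a, h, rfl⟩, fun ⟨w, h1, h2⟩ => h2 ▸ h1⟩
  rw [e]; exact h2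

end Add

end DefnAux

end AuxDev


section DfnMain

variable {R : Type*} {L : FirstOrder.Language} [L.Structure R]

local notation "Dfn" => Set.Definable (Set.univ : Set R) L

lemma comp_snoc {γ : Type*} {n : ℕ} (v : γ → R) (p : Fin n → γ) (q : γ) :
    v ∘ (Fin.snoc p q) = Fin.snoc (v ∘ p) (v q) := by
  funext j
  induction j using Fin.lastCases with
  | last => simp
  | cast i => simp

lemma elim_comp_snoc {γ : Type*} {m k : ℕ} (v : γ → R) (w : Fin k → R) (p : Fin m → γ)
    (q : Fin k) :
    Sum.elim v w ∘ Fin.snoc (fun i => Sum.inl (p i)) (Sum.inr q) =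
      Fin.snoc (fun i => v (p i)) (w q) := by
  rw [comp_snoc]
  simp [Function.comp_def]

section WithOrder

variable [LinearOrder R] [Add R]
variable (hlt : Set.Definable (Set.univ : Set R) L {v : Fin 2 → R | v 0 < v 1})
variable (hadd : Set.Definable (Set.univ : Set R) L {v : Fin 3 → R | v 0 + v 1 = v 2})
variable {n : ℕ} {X : Set (Fin (n + 1) → R)}
variable (hXDef : Set.Definable (Set.univ : Set R) L X)

include hlt hadd hXDef

lemma dfn_inner (s : R) {γ : Type*} (itt : γ) (ix : Fin n → γ) :
    Dfn {v : γ → R | ∃ y, v itt ≤ y ∧ y ≤ v itt + s ∧ Fin.snoc (fun i => v (ix i)) y ∉ X} := by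
  have h5 : Dfn ({v : γ ⊕ Fin 2 → R | v (Sum.inl itt) ≤ v (Sum.inr 0)} ∩
      ({v : γ ⊕ Fin 2 → R | v (Sum.inr 0) ≤ v (Sum.inr 1)} ∩
        ({v : γ ⊕ Fin 2 → R | v (Sum.inl itt) + s = v (Sum.inr 1)} ∩
          {v : γ ⊕ Fin 2 → R | v ∘ Fin.snoc (fun i => Sum.inl (ix i)) (Sum.inr 0) ∈ X}ᶜ))) :=
    (dfn_le hlt _ _).inter ((dfn_le hlt _ _).inter
      ((dfn_add_const hadd _ s _).inter ((dfn_reindex _ hXDef).compl)))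
  have h4 := dfn_exists_block h5
  convert h4 using 1
  ext v
  simp only [mem_setOf_eq, mem_inter_iff, mem_compl_iff, elim_comp_snoc, Sum.elim_inl,
    Sum.elim_inr]
  constructor
  · rintro ⟨y, h1, h2, h3⟩
    refine ⟨![y, v itt + s], ?_⟩
    simp only [Matrix.cons_val_zero, Matrix.cons_val_one, Matrix.head_cons]
    exact ⟨h1, h2, trivial, h3⟩
  · rintro ⟨w, h1, h2, h3, h4⟩
    exact ⟨w 0, h1, h3 ▸ h2, h4⟩

lemma dfn_core (s c : R) {γ : Type*} (it : γ) (ia ib : Fin n → γ) :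
    Dfn {v : γ → R | ∀ (x' : Fin n → R) (t'' : R),
      (∀ i, v (ia i) < x' i ∧ x' i < v (ib i)) → c ≤ t'' → t'' ≤ v it →
        ∃ y, t'' ≤ y ∧ y ≤ t'' + s ∧ Fin.snoc x' y ∉ X} := by
  -- innermost over (γ ⊕ Fin n) ⊕ Fin 1 : variables x' (block Fin n), t'' (block Fin 1)
  have hin := dfn_inner hlt hadd hXDef s (γ := (γ ⊕ Fin n) ⊕ Fin 1)
    (Sum.inr 0) (fun i => Sum.inl (Sum.inr i))
  have hbox : Dfn (⋂ i : Fin n, ({v : (γ ⊕ Fin n) ⊕ Fin 1 → R |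
        v (Sum.inl (Sum.inl (ia i))) < v (Sum.inl (Sum.inr i))} ∩
      {v : (γ ⊕ Fin n) ⊕ Fin 1 → R |
        v (Sum.inl (Sum.inr i)) < v (Sum.inl (Sum.inl (ib i)))})) :=
    dfn_iInter (fun i => (dfn_lt hlt _ _).inter (dfn_lt hlt _ _))
  have hc : Dfn {v : (γ ⊕ Fin n) ⊕ Fin 1 → R | c ≤ v (Sum.inr 0)} := dfn_const_le hlt c _
  have ht : Dfn {v : (γ ⊕ Fin n) ⊕ Fin 1 → R |
      v (Sum.inr 0) ≤ v (Sum.inl (Sum.inl it))} := dfn_le hlt _ _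
  have h4 := ((hbox.compl.union (hc.compl.union (ht.compl.union hin))))
  have h3 := dfn_forall_block (m := 1) h4
  have h2 : Dfn {v : γ ⊕ Fin n → R | ∀ t'' : R,
      (∀ i, v (Sum.inl (ia i)) < v (Sum.inr i) ∧ v (Sum.inr i) < v (Sum.inl (ib i))) →
        c ≤ t'' → t'' ≤ v (Sum.inl it) →
        ∃ y, t'' ≤ y ∧ y ≤ t'' + s ∧ Fin.snoc (fun i => v (Sum.inr i)) y ∉ X} := by
    convert h3 using 1
    ext v
    simp only [mem_setOf_eq, mem_union, mem_compl_iff, mem_iInter, mem_inter_iff,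
      Sum.elim_inl, Sum.elim_inr]
    constructor
    · intro hv w
      rcases Classical.em (∀ i, v (Sum.inl (ia i)) < v (Sum.inr i) ∧
          v (Sum.inr i) < v (Sum.inl (ib i))) with hB | hB
      · rcases Classical.em (c ≤ w 0) with hc' | hc'
        · rcases Classical.em (w 0 ≤ v (Sum.inl it)) with ht' | ht'
          · exact Or.inr (Or.inr (Or.inr (hv (w 0) hB hc' ht')))
          · exact Or.inr (Or.inr (Or.inl ht'))
        · exact Or.inr (Or.inl hc')
      · exact Or.inl hB
    · intro hv t'' hB hc' ht'
      rcases hv (fun _ => t'') with h | h | h | h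
      · exact absurd hB h
      · exact absurd hc' h
      · exact absurd ht' h
      · exact h
  have h1 := dfn_forall_block (m := n) h2
  exact h1

lemma dfn_S (s c dd : R) (x : Fin n → R) :
    Dfn {v : Fin 1 → R | (c ≤ v 0 ∧ v 0 ≤ dd) ∧
      ∃ a b : Fin n → R, (∀ i, a i < x i ∧ x i < b i) ∧
        ∀ (x' : Fin n → R) (t'' : R), (∀ i, a i < x' i ∧ x' i < b i) → c ≤ t'' → t'' ≤ v 0 →
          ∃ y, t'' ≤ y ∧ y ≤ t'' + s ∧ Fin.snoc x' y ∉ X} := by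
  have hcore := dfn_core hlt hadd hXDef s c
    (γ := (Fin 1 ⊕ Fin n) ⊕ Fin n) (Sum.inl (Sum.inl 0))
    (fun i => Sum.inl (Sum.inr i)) (fun i => Sum.inr i)
  have hbox : Dfn (⋂ i : Fin n, ({v : (Fin 1 ⊕ Fin n) ⊕ Fin n → R |
        v (Sum.inl (Sum.inr i)) < x i} ∩
      {v : (Fin 1 ⊕ Fin n) ⊕ Fin n → R | x i < v (Sum.inr i)})) :=
    dfn_iInter (fun i => (dfn_lt_const hlt _ (x i)).inter (dfn_const_lt hlt (x i) _))
  have h2 := hbox.inter hcore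
  have h1 := dfn_exists_block h2
  have h1' : Dfn {v : Fin 1 ⊕ Fin n → R | ∃ b : Fin n → R,
      (∀ i, v (Sum.inr i) < x i ∧ x i < b i) ∧
        ∀ (x' : Fin n → R) (t'' : R), (∀ i, v (Sum.inr i) < x' i ∧ x' i < b i) →
          c ≤ t'' → t'' ≤ v (Sum.inl 0) →
          ∃ y, t'' ≤ y ∧ y ≤ t'' + s ∧ Fin.snoc x' y ∉ X} := by
    convert h1 using 1
    ext v
    simp only [mem_setOf_eq, mem_inter_iff, mem_iInter, Sum.elim_inl, Sum.elim_inr]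
  have h0 := dfn_exists_block h1'
  have h0' : Dfn {v : Fin 1 → R | ∃ a b : Fin n → R,
      (∀ i, a i < x i ∧ x i < b i) ∧
        ∀ (x' : Fin n → R) (t'' : R), (∀ i, a i < x' i ∧ x' i < b i) →
          c ≤ t'' → t'' ≤ v 0 →
          ∃ y, t'' ≤ y ∧ y ≤ t'' + s ∧ Fin.snoc x' y ∉ X} := h0
  exact ((dfn_const_le hlt c (0 : Fin 1)).inter (dfn_le_const hlt (0 : Fin 1) dd)).inter h0'

lemma dfn_tinner (s : R) {γ : Type*} (iu : γ) (ix : Fin n → γ) :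
    Dfn {v : γ → R | ∃ t, t ≤ v iu ∧
      ∀ y, t ≤ y ∧ y ≤ t + s → Fin.snoc (fun i => v (ix i)) y ∈ X} := by
  have h0 : Dfn (({v : (γ ⊕ Fin 2) ⊕ Fin 1 → R |
        v (Sum.inl (Sum.inr 0)) ≤ v (Sum.inr 0)} ∩
      {v : (γ ⊕ Fin 2) ⊕ Fin 1 → R | v (Sum.inr 0) ≤ v (Sum.inl (Sum.inr 1))})ᶜ ∪
      {v : (γ ⊕ Fin 2) ⊕ Fin 1 → R |
        v ∘ Fin.snoc (fun i => Sum.inl (Sum.inl (ix i))) (Sum.inr 0) ∈ X}) :=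
    ((dfn_le hlt _ _).inter (dfn_le hlt _ _)).compl.union (dfn_reindex _ hXDef)
  have h1 := dfn_forall_block (m := 1) h0
  have h1' : Dfn {v : γ ⊕ Fin 2 → R | ∀ y : R,
      v (Sum.inr 0) ≤ y ∧ y ≤ v (Sum.inr 1) →
        Fin.snoc (fun i => v (Sum.inl (ix i))) y ∈ X} := by
    convert h1 using 1
    ext v
    simp only [mem_setOf_eq, mem_union, mem_compl_iff, mem_inter_iff, elim_comp_snoc,
      Sum.elim_inl, Sum.elim_inr]
    constructor
    · intro hv w
      rcases Classical.em (v (Sum.inr 0) ≤ w 0 ∧ w 0 ≤ v (Sum.inr 1)) with hB | hB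
      · exact Or.inr (hv (w 0) hB)
      · exact Or.inl hB
    · intro hv y hy
      rcases hv (fun _ => y) with h | h
      · exact absurd hy h
      · exact h
  have h2 := ((dfn_le hlt (Sum.inr 0 : γ ⊕ Fin 2) (Sum.inl iu)).inter
    ((dfn_add_const hadd (Sum.inr 0 : γ ⊕ Fin 2) s (Sum.inr 1)).inter h1'))
  have h3 := dfn_exists_block h2
  convert h3 using 1
  ext v
  simp only [mem_setOf_eq, mem_inter_iff, Sum.elim_inl, Sum.elim_inr]
  constructor
  · rintro ⟨t, h1, h2⟩
    refine ⟨![t, t + s], ?_⟩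
    simp only [Matrix.cons_val_zero, Matrix.cons_val_one, Matrix.head_cons]
    exact ⟨h1, trivial, h2⟩
  · rintro ⟨w, h1, h2, h3⟩
    exact ⟨w 0, h1, by rw [← h2] at h3; exact h3⟩

lemma dfn_T (s : R) :
    Dfn {v : Fin 1 → R | ∃ a b : Fin n → R, (∀ i, a i < b i) ∧
      ∀ x' : Fin n → R, (∀ i, a i < x' i ∧ x' i < b i) →
        ∃ t, t ≤ v 0 ∧ ∀ y, t ≤ y ∧ y ≤ t + s → Fin.snoc x' y ∈ X} := by
  have hin := dfn_tinner hlt hadd hXDef s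
    (γ := (((Fin 1 ⊕ Fin n) ⊕ Fin n) ⊕ Fin n)) (Sum.inl (Sum.inl (Sum.inl 0)))
    (fun i => Sum.inr i)
  have hbox : Dfn (⋂ i : Fin n, ({v : ((Fin 1 ⊕ Fin n) ⊕ Fin n) ⊕ Fin n → R |
        v (Sum.inl (Sum.inl (Sum.inr i))) < v (Sum.inr i)} ∩
      {v : ((Fin 1 ⊕ Fin n) ⊕ Fin n) ⊕ Fin n → R |
        v (Sum.inr i) < v (Sum.inl (Sum.inr i))})) :=
    dfn_iInter (fun i => (dfn_lt hlt _ _).inter (dfn_lt hlt _ _))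
  have h3 := hbox.compl.union hin
  have h2 := dfn_forall_block (m := n) h3
  have h2' : Dfn {v : (Fin 1 ⊕ Fin n) ⊕ Fin n → R | ∀ x' : Fin n → R,
      (∀ i, v (Sum.inl (Sum.inr i)) < x' i ∧ x' i < v (Sum.inr i)) →
        ∃ t, t ≤ v (Sum.inl (Sum.inl 0)) ∧
          ∀ y, t ≤ y ∧ y ≤ t + s → Fin.snoc x' y ∈ X} := by
    convert h2 using 1
    ext v
    simp only [mem_setOf_eq, mem_union, mem_compl_iff, mem_iInter, mem_inter_iff,
      Sum.elim_inl, Sum.elim_inr]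
    constructor
    · intro hv w
      rcases Classical.em (∀ i, v (Sum.inl (Sum.inr i)) < w i ∧ w i < v (Sum.inr i)) with hB | hB
      · exact Or.inr (hv w hB)
      · exact Or.inl hB
    · intro hv x' hB
      rcases hv x' with h | h
      · exact absurd hB h
      · exact h
  have hblt : Dfn (⋂ i : Fin n, {v : (Fin 1 ⊕ Fin n) ⊕ Fin n → R |
      v (Sum.inl (Sum.inr i)) < v (Sum.inr i)}) :=
    dfn_iInter (fun i => dfn_lt hlt _ _)
  have h1 := dfn_exists_block (hblt.inter h2')
  have h1' : Dfn {v : Fin 1 ⊕ Fin n → R | ∃ b : Fin n → R,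
      (∀ i, v (Sum.inr i) < b i) ∧ ∀ x' : Fin n → R,
        (∀ i, v (Sum.inr i) < x' i ∧ x' i < b i) →
          ∃ t, t ≤ v (Sum.inl 0) ∧ ∀ y, t ≤ y ∧ y ≤ t + s → Fin.snoc x' y ∈ X} := by
    convert h1 using 1
    ext v
    simp only [mem_setOf_eq, mem_inter_iff, mem_iInter, Sum.elim_inl, Sum.elim_inr]
  have h0 := dfn_exists_block h1'
  exact h0

end WithOrder

section LB

variable [LinearOrder R]

lemma dfn_lb (hlt : Set.Definable (Set.univ : Set R) L {v : Fin 2 → R | v 0 < v 1})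
    {S : Set R} (hS : Dfn {v : Fin 1 → R | v 0 ∈ S}) :
    Dfn {v : Fin 1 → R | v 0 ∈ lowerBounds S} := by
  have hmem : Dfn {v : Fin 1 ⊕ Fin 1 → R | v (Sum.inr 0) ∈ S} := by
    have := dfn_reindex (fun _ : Fin 1 => (Sum.inr 0 : Fin 1 ⊕ Fin 1)) hS
    convert this using 1
    rfl
  have h0 := hmem.compl.union (dfn_le hlt (Sum.inl 0 : Fin 1 ⊕ Fin 1) (Sum.inr 0))
  have h1 := dfn_forall_block (m := 1) h0
  convert h1 using 1
  ext v
  simp only [mem_setOf_eq, mem_union, mem_compl_iff, Sum.elim_inl, Sum.elim_inr]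
  constructor
  · intro hv w
    rcases Classical.em (w 0 ∈ S) with hw | hw
    · exact Or.inr (hv hw)
    · exact Or.inl hw
  · intro hv y hy
    rcases hv (fun _ => y) with h | h
    · exact absurd hy h
    · exact h

end LB

end DfnMain


section TopAux

variable {R : Type*} [LinearOrder R] [AddCommGroup R]
    [CovariantClass R R (· + ·) (· < ·)] [TopologicalSpace R] [OrderTopology R]

lemma lt_add_pos {a s : R} (hs : 0 < s) : a < a + s := by
  have := add_lt_add_right hs a
  rwa [add_zero] at this

lemma add_lt_add_right'' {a b : R} (h : a < b) (c : R) : a + c < b + c := by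
  rw [add_comm a c, add_comm b c]
  exact add_lt_add_right h c

lemma sub_lt_iff'' {a b c : R} : a - c < b ↔ a < b + c := by
  constructor
  · intro h
    have := add_lt_add_right'' h c
    rwa [sub_add_cancel] at this
  · intro h
    have := add_lt_add_right'' h (-c)
    rwa [add_neg_cancel_right, ← sub_eq_add_neg] at this

lemma lt_sub_iff'' {a b c : R} : a < b - c ↔ a + c < b := by
  constructor
  · intro h
    have := add_lt_add_right'' h c
    rwa [sub_add_cancel] at this
  · intro h
    have := add_lt_add_right'' h (-c)
    rwa [add_neg_cancel_right, ← sub_eq_add_neg] at this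

lemma sub_lt_self'' (a : R) {s : R} (hs : 0 < s) : a - s < a :=
  sub_lt_iff''.2 (lt_add_pos hs)

lemma box_open {k : ℕ} (a b : Fin k → R) :
    IsOpen {q : Fin k → R | ∀ i, a i < q i ∧ q i < b i} := by
  have he : {q : Fin k → R | ∀ i, a i < q i ∧ q i < b i} =
      Set.pi Set.univ (fun i => Set.Ioo (a i) (b i)) := by
    ext q
    simp [Set.mem_pi, Set.mem_Ioo]
  rw [he]
  exact isOpen_set_pi finite_univ (fun i _ => isOpen_Ioo)

lemma box_nbhd {k : ℕ} {O : Set (Fin k → R)} (hO : IsOpen O) {p : Fin k → R} (hp : p ∈ O)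
    {e : R} (he : 0 < e) :
    ∃ a b : Fin k → R, (∀ i, a i < p i ∧ p i < b i) ∧
      ∀ q : Fin k → R, (∀ i, a i < q i ∧ q i < b i) → q ∈ O := by
  obtain ⟨I, u, hu, hsub⟩ := isOpen_pi_iff.1 hO p hp
  have key : ∀ i : Fin k, ∃ ab : R × R, (ab.1 < p i ∧ p i < ab.2) ∧
      (i ∈ I → Set.Ioo ab.1 ab.2 ⊆ u i) := by
    intro i
    by_cases hi : i ∈ I
    · obtain ⟨l, r, hin, hsub2⟩ := (mem_nhds_iff_exists_Ioo_subset'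
        ⟨p i - e, sub_lt_self'' _ he⟩ ⟨p i + e, lt_add_pos he⟩).1
        ((hu i hi).1.mem_nhds (hu i hi).2)
      exact ⟨(l, r), ⟨hin.1, hin.2⟩, fun _ => hsub2⟩
    · exact ⟨(p i - e, p i + e), ⟨sub_lt_self'' _ he, lt_add_pos he⟩, fun hi' => absurd hi' hi⟩
  choose ab hab1 hab2 using key
  refine ⟨fun i => (ab i).1, fun i => (ab i).2, hab1, fun q hq => hsub ?_⟩
  intro i hi
  exact hab2 i hi ⟨(hq i).1, (hq i).2⟩

lemma not_subset_fiber_iff {n : ℕ} {X : Set (Fin (n + 1) → R)} {x' : Fin n → R} {p q : R} :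
    ¬ (Set.Icc p q ⊆ fiber1 X x') ↔ ∃ y, p ≤ y ∧ y ≤ q ∧ Fin.snoc x' y ∉ X := by
  rw [Set.not_subset]
  constructor
  · rintro ⟨y, hy, hyn⟩
    exact ⟨y, hy.1, hy.2, hyn⟩
  · rintro ⟨y, h1, h2, h3⟩
    exact ⟨y, ⟨h1, h2⟩, h3⟩

lemma pointwise_claim {n : ℕ} {X : Set (Fin (n + 1) → R)} (hXcl : IsClosed X)
    {s : R} (hs : 0 < s) (x : Fin n → R) (t' : R)
    (hfail : ¬ (Set.Icc t' (t' + s) ⊆ fiber1 X x)) :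
    ∃ (a b : Fin n → R) (l r : R), (∀ i, a i < x i ∧ x i < b i) ∧ l < t' ∧ t' < r ∧
      ∀ (x' : Fin n → R) (t'' : R), (∀ i, a i < x' i ∧ x' i < b i) → l < t'' → t'' < r →
        ¬ (Set.Icc t'' (t'' + s) ⊆ fiber1 X x') := by
  obtain ⟨y, hy1, hy2, hyn⟩ := not_subset_fiber_iff.1 hfail
  obtain ⟨A, B, hAB, hbox⟩ := box_nbhd hXcl.isOpen_compl (show Fin.snoc x y ∈ Xᶜ from hyn) hs
  have hai : ∀ i, A (Fin.castSucc i) < x i ∧ x i < B (Fin.castSucc i) := by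
    intro i
    have h1 := hAB (Fin.castSucc i)
    rwa [Fin.snoc_castSucc] at h1
  have hyA : A (Fin.last n) < y ∧ y < B (Fin.last n) := by
    have h1 := hAB (Fin.last n)
    rwa [Fin.snoc_last] at h1
  have hout : ∀ (x' : Fin n → R) (y' : R),
      (∀ i, A (Fin.castSucc i) < x' i ∧ x' i < B (Fin.castSucc i)) →
      A (Fin.last n) < y' → y' < B (Fin.last n) → Fin.snoc x' y' ∉ X := by
    intro x' y' hx' h1 h2
    have hmem : Fin.snoc x' y' ∈ Xᶜ := by
      apply hbox
      intro j
      induction j using Fin.lastCases with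
      | last => rw [Fin.snoc_last]; exact ⟨h1, h2⟩
      | cast i => rw [Fin.snoc_castSucc]; exact hx' i
    exact hmem
  by_cases hcase : t' < y ∧ y < t' + s
  · refine ⟨fun i => A (Fin.castSucc i), fun i => B (Fin.castSucc i), y - s, y, hai,
      sub_lt_iff''.2 hcase.2, hcase.1, ?_⟩
    intro x' t'' hx' hl hr hsub
    have hymem : y ∈ Set.Icc t'' (t'' + s) := ⟨le_of_lt hr, le_of_lt (sub_lt_iff''.1 hl)⟩
    exact hout x' y hx' hyA.1 hyA.2 (hsub hymem)
  · have hcase2 : y = t' ∨ y = t' + s := by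
      rcases eq_or_lt_of_le hy1 with h | h
      · exact Or.inl h.symm
      · rcases eq_or_lt_of_le hy2 with h2 | h2
        · exact Or.inr h2
        · exact absurd ⟨h, h2⟩ hcase
    rcases hcase2 with rfl | hyy
    · refine ⟨fun i => A (Fin.castSucc i), fun i => B (Fin.castSucc i),
        A (Fin.last n), B (Fin.last n), hai, hyA.1, hyA.2, ?_⟩
      intro x' t'' hx' hl hr hsub
      have hmem : t'' ∈ Set.Icc t'' (t'' + s) := ⟨le_refl _, le_of_lt (lt_add_pos hs)⟩
      exact hout x' t'' hx' hl hr (hsub hmem)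
    · subst hyy
      refine ⟨fun i => A (Fin.castSucc i), fun i => B (Fin.castSucc i),
        A (Fin.last n) - s, B (Fin.last n) - s, hai, sub_lt_iff''.2 hyA.1,
        lt_sub_iff''.2 hyA.2, ?_⟩
      intro x' t'' hx' hl hr hsub
      have hmem : t'' + s ∈ Set.Icc t'' (t'' + s) := ⟨le_of_lt (lt_add_pos hs), le_refl _⟩
      refine hout x' (t'' + s) hx' ?_ ?_ (hsub hmem)
      · exact sub_lt_iff''.1 hl
      · exact lt_sub_iff''.1 hr

end TopAux

section ClosedC

variable {R : Type*} (L : FirstOrder.Language) [L.Structure R]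
    [LinearOrder R] [DenselyOrdered R] [AddCommGroup R]
    [CovariantClass R R (· + ·) (· < ·)] [TopologicalSpace R] [OrderTopology R]

lemma closed_C
    (hlt : IsDefinable L {v : Fin 2 → R | v 0 < v 1})
    (hadd : IsDefinable L {v : Fin 3 → R | v 0 + v 1 = v 2})
    (hDC : DCProp L R)
    {n : ℕ} {X : Set (Fin (n + 1) → R)}
    (hXDef : IsDefinable L X) (hXcl : IsClosed X)
    {s c d : R} (hs : 0 < s) (hcd : c ≤ d)
    (hb : ∀ z ∈ X, c ≤ z (Fin.last n) ∧ z (Fin.last n) ≤ d) (u : R) :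
    IsClosed {x : Fin n → R | ∃ t, t ≤ u ∧ Set.Icc t (t + s) ⊆ fiber1 X x} := by
  by_cases hcu : u < c
  · have hempty : {x : Fin n → R | ∃ t, t ≤ u ∧ Set.Icc t (t + s) ⊆ fiber1 X x} = ∅ := by
      ext x
      simp only [mem_setOf_eq, Set.mem_empty_iff_false, iff_false, not_exists, not_and]
      intro t htu hsub
      have hX : Fin.snoc x t ∈ X := hsub ⟨le_refl _, le_of_lt (lt_add_pos hs)⟩
      have hct := (hb _ hX).1
      rw [Fin.snoc_last] at hct
      exact absurd (hct.trans htu) (not_le.2 hcu)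
    rw [hempty]
    exact isClosed_empty
  · push_neg at hcu
    rw [← isOpen_compl_iff, isOpen_iff_forall_mem_open]
    intro x hx
    simp only [Set.mem_compl_iff, mem_setOf_eq, not_exists, not_and] at hx
    have hcd' : c ≤ min u d := le_min hcu hcd
    have hfail : ∀ t', t' ≤ min u d → ¬ (Set.Icc t' (t' + s) ⊆ fiber1 X x) :=
      fun t' ht' => hx t' (ht'.trans (min_le_left _ _))
    set S := {t : R | (c ≤ t ∧ t ≤ min u d) ∧
      ∃ a b : Fin n → R, (∀ i, a i < x i ∧ x i < b i) ∧
        ∀ (x' : Fin n → R) (t'' : R), (∀ i, a i < x' i ∧ x' i < b i) → c ≤ t'' → t'' ≤ t →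
          ∃ y, t'' ≤ y ∧ y ≤ t'' + s ∧ Fin.snoc x' y ∉ X} with hSdefn
    have hSdef : IsDefinable L {v : Fin 1 → R | v 0 ∈ S} := dfn_S hlt hadd hXDef s c (min u d) x
    have hcS : c ∈ S := by
      obtain ⟨a, b, l, r, hab, hl, hr, hmain⟩ := pointwise_claim hXcl hs x c (hfail c hcd')
      refine ⟨⟨le_refl _, hcd'⟩, a, b, hab, ?_⟩
      intro x' t'' hx' hc'' ht''
      have ht''eq : t'' = c := le_antisymm ht'' hc''
      subst ht''eq
      exact not_subset_fiber_iff.1 (hmain x' t'' hx' hl hr)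
    have hBdd : BddAbove S := ⟨min u d, fun t ht => ht.1.2⟩
    obtain ⟨m, hm⟩ := hDC S hSdef ⟨c, hcS⟩ hBdd
    have hmc : c ≤ m := hm.1 hcS
    have hmd' : m ≤ min u d := hm.2 (fun t ht => ht.1.2)
    obtain ⟨a₀, b₀, l₀, r₀, hab₀, hl₀, hr₀, hmain₀⟩ :=
      pointwise_claim hXcl hs x m (hfail m hmd')
    have hex : ∃ t ∈ S, l₀ < t := by
      by_contra hcon
      push_neg at hcon
      exact absurd (hm.2 fun t ht => hcon t ht) (not_le.2 hl₀)
    obtain ⟨t₁, ht₁S, hlt₁⟩ := hex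
    obtain ⟨⟨ht₁c, ht₁d⟩, a₁, b₁, hab₁, hmain₁⟩ := ht₁S
    have hab₂ : ∀ i, max (a₀ i) (a₁ i) < x i ∧ x i < min (b₀ i) (b₁ i) :=
      fun i => ⟨max_lt (hab₀ i).1 (hab₁ i).1, lt_min (hab₀ i).2 (hab₁ i).2⟩
    have hmain₂ : ∀ (x' : Fin n → R) (t'' : R),
        (∀ i, max (a₀ i) (a₁ i) < x' i ∧ x' i < min (b₀ i) (b₁ i)) →
        c ≤ t'' → t'' < r₀ → ¬ (Set.Icc t'' (t'' + s) ⊆ fiber1 X x') := by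
      intro x' t'' hx' hc'' hr''
      have hx0 : ∀ i, a₀ i < x' i ∧ x' i < b₀ i :=
        fun i => ⟨(le_max_left _ _).trans_lt (hx' i).1, (hx' i).2.trans_le (min_le_left _ _)⟩
      have hx1 : ∀ i, a₁ i < x' i ∧ x' i < b₁ i :=
        fun i => ⟨(le_max_right _ _).trans_lt (hx' i).1, (hx' i).2.trans_le (min_le_right _ _)⟩
      by_cases hcase : t'' ≤ t₁
      · exact not_subset_fiber_iff.2 (hmain₁ x' t'' hx1 hc'' hcase)
      · push_neg at hcase
        exact hmain₀ x' t'' hx0 (hlt₁.trans hcase) hr''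
    have hd'r₀ : min u d < r₀ := by
      by_contra hcon
      push_neg at hcon
      obtain ⟨γ, hγ1, hγ2⟩ := exists_between hr₀
      have hγS : γ ∈ S := by
        refine ⟨⟨hmc.trans (le_of_lt hγ1), (le_of_lt hγ2).trans hcon⟩,
          fun i => max (a₀ i) (a₁ i), fun i => min (b₀ i) (b₁ i), hab₂, ?_⟩
        intro x' t'' hx' hc'' ht''
        exact not_subset_fiber_iff.1 (hmain₂ x' t'' hx' hc'' (lt_of_le_of_lt ht'' hγ2))
      exact absurd (hm.1 hγS) (not_le.2 hγ1)
    refine ⟨{q : Fin n → R | ∀ i, max (a₀ i) (a₁ i) < q i ∧ q i < min (b₀ i) (b₁ i)},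
      ?_, box_open _ _, hab₂⟩
    intro q hq
    rintro ⟨t₃, ht₃u, hsub₃⟩
    have hX3 : Fin.snoc q t₃ ∈ X := hsub₃ ⟨le_refl _, le_of_lt (lt_add_pos hs)⟩
    have hbt := hb _ hX3
    rw [Fin.snoc_last] at hbt
    have ht₃d' : t₃ ≤ min u d := le_min ht₃u hbt.2
    exact hmain₂ q t₃ hq hbt.1 (lt_of_le_of_lt ht₃d' hd'r₀) hsub₃

end ClosedC

/-- Let `𝓡` be a definably complete expansion of a densely linearly
ordered abelian group. A CBD set `X ⊆ R^{n+1}` has nonempty interior if, for some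
`s > 0`, the set of `x ∈ R^n` whose fiber `X_x` contains a closed interval of length
`s` has nonempty interior. -/
theorem cbd_nonempty_interior_of_fibers_with_intervals
    {R : Type*} (L : FirstOrder.Language) [L.Structure R]
    [LinearOrder R] [DenselyOrdered R] [AddCommGroup R]
    [CovariantClass R R (· + ·) (· < ·)] [TopologicalSpace R] [OrderTopology R]
    (hlt : IsDefinable L {v : Fin 2 → R | v 0 < v 1})
    (hadd : IsDefinable L {v : Fin 3 → R | v 0 + v 1 = v 2})
    (hDC : DCProp L R)
    {n : ℕ} (X : Set (Fin (n + 1) → R))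
    (hXDef : IsDefinable L X) (hXcl : IsClosed X) (hXbdd : BddSet X)
    (h : ∃ s : R, 0 < s ∧
      (interior {x : Fin n → R | ∃ t : R, Set.Icc t (t + s) ⊆ fiber1 X x}).Nonempty) :
    (interior X).Nonempty := by
  obtain ⟨s, hs, p, hp⟩ := h
  obtain ⟨c, d, hbdd⟩ := hXbdd
  have hb : ∀ z ∈ X, c ≤ z (Fin.last n) ∧ z (Fin.last n) ≤ d := fun z hz => hbdd z hz _
  have hpA : p ∈ {x : Fin n → R | ∃ t, Set.Icc t (t + s) ⊆ fiber1 X x} := interior_subset hp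
  obtain ⟨t₀, ht₀⟩ := hpA
  have hX0 : Fin.snoc p t₀ ∈ X := ht₀ ⟨le_refl _, le_of_lt (lt_add_pos hs)⟩
  have hcd : c ≤ d := le_trans (hb _ hX0).1 (hb _ hX0).2
  set C : R → Set (Fin n → R) :=
    fun u => {x | ∃ t, t ≤ u ∧ Set.Icc t (t + s) ⊆ fiber1 X x} with hCdefn
  have hCcl : ∀ u, IsClosed (C u) := fun u => closed_C L hlt hadd hDC hXDef hXcl hs hcd hb u
  have hCmono : ∀ u u' : R, u ≤ u' → C u ⊆ C u' := by
    rintro u u' huu x ⟨t, ht, hsub⟩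
    exact ⟨t, ht.trans huu, hsub⟩
  set T := {u : R | ∃ a b : Fin n → R, (∀ i, a i < b i) ∧
      ∀ x' : Fin n → R, (∀ i, a i < x' i ∧ x' i < b i) →
        ∃ t, t ≤ u ∧ ∀ y, t ≤ y ∧ y ≤ t + s → Fin.snoc x' y ∈ X} with hTdefn
  have hTdef : IsDefinable L {v : Fin 1 → R | v 0 ∈ T} := dfn_T hlt hadd hXDef s
  have hTC : ∀ (u : R) (x' : Fin n → R),
      (∃ t, t ≤ u ∧ ∀ y, t ≤ y ∧ y ≤ t + s → Fin.snoc x' y ∈ X) ↔ x' ∈ C u := by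
    intro u x'
    constructor
    · rintro ⟨t, htu, hy⟩
      exact ⟨t, htu, fun y hy' => hy y ⟨hy'.1, hy'.2⟩⟩
    · rintro ⟨t, htu, hsub⟩
      exact ⟨t, htu, fun y hy' => hsub ⟨hy'.1, hy'.2⟩⟩
  have hTd : d ∈ T := by
    obtain ⟨a, b, hab, hbox⟩ := box_nbhd isOpen_interior hp hs
    refine ⟨a, b, fun i => (hab i).1.trans (hab i).2, ?_⟩
    intro x' hx'
    obtain ⟨t, hsub⟩ := (interior_subset (hbox x' hx') :
      x' ∈ {x : Fin n → R | ∃ t, Set.Icc t (t + s) ⊆ fiber1 X x})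
    have hXt : Fin.snoc x' t ∈ X := hsub ⟨le_refl _, le_of_lt (lt_add_pos hs)⟩
    have htd := (hb _ hXt).2
    rw [Fin.snoc_last] at htd
    exact ⟨t, htd, fun y hy => hsub ⟨hy.1, hy.2⟩⟩
  have hTlbc : c ∈ lowerBounds T := by
    rintro u ⟨a, b, hab, hall⟩
    choose z hz using fun i => exists_between (hab i)
    obtain ⟨t, htu, hy⟩ := hall z hz
    have hXt : Fin.snoc z t ∈ X := hy t ⟨le_refl _, le_of_lt (lt_add_pos hs)⟩
    have hct := (hb _ hXt).1
    rw [Fin.snoc_last] at hct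
    exact hct.trans htu
  have hLBdef : IsDefinable L {v : Fin 1 → R | v 0 ∈ lowerBounds T} := dfn_lb hlt hTdef
  obtain ⟨u₀, hu₀⟩ := hDC (lowerBounds T) hLBdef ⟨c, hTlbc⟩ ⟨d, fun r hr => hr hTd⟩
  have hglbLB : u₀ ∈ lowerBounds T := fun τ hτ => hu₀.2 (fun r hr => hr hτ)
  obtain ⟨h₀, hh₀, hh₀s⟩ := exists_between hs
  have hex : ∃ τ ∈ T, τ < u₀ + h₀ := by
    by_contra hcon
    push_neg at hcon
    have hlb : u₀ + h₀ ∈ lowerBounds T := fun τ hτ => hcon τ hτ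
    exact absurd (hu₀.1 hlb) (not_le.2 (lt_add_pos hh₀))
  obtain ⟨τ, hτT, hτlt⟩ := hex
  obtain ⟨aτ, bτ, habτ, hallτ⟩ := hτT
  have hVne : (interior (C (u₀ + h₀))).Nonempty := by
    have hboxsub : {q : Fin n → R | ∀ i, aτ i < q i ∧ q i < bτ i} ⊆ C (u₀ + h₀) :=
      fun q hq => hCmono τ (u₀ + h₀) (le_of_lt hτlt) ((hTC τ q).1 (hallτ q hq))
    choose z hz using fun i => exists_between (habτ i)
    exact ⟨z, interior_maximal hboxsub (box_open aτ bτ) hz⟩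
  obtain ⟨u', hu'1, hu'2⟩ := exists_between (show u₀ + h₀ - s < u₀ by
    rw [sub_lt_iff'']
    exact add_lt_add_right hh₀s u₀)
  have hWne : ((interior (C (u₀ + h₀))) \ C u').Nonempty := by
    by_contra hcon
    rw [Set.not_nonempty_iff_eq_empty, Set.diff_eq_empty] at hcon
    obtain ⟨pV, hpV⟩ := hVne
    obtain ⟨a, b, hab, hbox⟩ := box_nbhd isOpen_interior hpV hs
    have hu'T : u' ∈ T := by
      refine ⟨a, b, fun i => (hab i).1.trans (hab i).2, ?_⟩
      intro x' hx'
      exact (hTC u' x').2 (hcon (hbox x' hx'))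
    exact absurd (hglbLB hu'T) (not_le.2 hu'2)
  obtain ⟨x₀, hx₀V, hx₀n⟩ := hWne
  obtain ⟨y₀, hy₀1, hy₀2⟩ := exists_between (sub_lt_iff''.1 hu'1)
  have hOopen : IsOpen {z : Fin (n + 1) → R |
      Fin.init z ∈ interior (C (u₀ + h₀)) \ C u' ∧
      z (Fin.last n) ∈ Set.Ioo (u₀ + h₀) (u' + s)} := by
    have h1 : Continuous (fun z : Fin (n + 1) → R => Fin.init z) :=
      continuous_pi fun i => continuous_apply (Fin.castSucc i)
    have h2 : Continuous (fun z : Fin (n + 1) → R => z (Fin.last n)) := continuous_apply _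
    exact ((isOpen_interior.sdiff (hCcl u')).preimage h1).inter (isOpen_Ioo.preimage h2)
  have hOsub : {z : Fin (n + 1) → R |
      Fin.init z ∈ interior (C (u₀ + h₀)) \ C u' ∧
      z (Fin.last n) ∈ Set.Ioo (u₀ + h₀) (u' + s)} ⊆ X := by
    rintro z ⟨⟨hzV, hzn⟩, hzy⟩
    obtain ⟨t, htle, hsub⟩ := interior_subset hzV
    have hu't : u' < t := by
      by_contra hcon
      push_neg at hcon
      exact hzn ⟨t, hcon, hsub⟩
    have hy1 : t ≤ z (Fin.last n) := le_of_lt (lt_of_le_of_lt htle hzy.1)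
    have hy2 : z (Fin.last n) ≤ t + s :=
      le_of_lt (hzy.2.trans (add_lt_add_right'' hu't s))
    have hmem : Fin.snoc (Fin.init z) (z (Fin.last n)) ∈ X := hsub ⟨hy1, hy2⟩
    rwa [Fin.snoc_init_self] at hmem
  refine ⟨Fin.snoc x₀ y₀, interior_maximal hOsub hOopen ?_⟩
  constructor
  · rw [Fin.init_snoc]
    exact ⟨hx₀V, hx₀n⟩
  · rw [Fin.snoc_last]
    exact ⟨hy₀1, hy₀2⟩
end

section
/- Let 𝓡 = (R, <, +, 0, …) be an expansion of a densely linearly ordered abelian group with 𝓡 ⊨ DC and 𝓡 ⊨ LUF₂. Let X ⊆ R^{m+n} be a definable set such that the fiber X_x is closed and discrete for every x ∈ R^m. Then for every (b,a) ∈ R^m × R^n there exist a closed box B ⊆ R^n with a ∈ int(B) and an open box U containing b such that X_x ∩ B is a finite set for every x ∈ U. In addition, U can be taken to be R^m if 𝓡 ⊨ LUF₁, and B can be taken independently of X if 𝓡 ⊨ SLUF. -/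
open FirstOrder Set Topology

section Toolkit
variable {R : Type*} (L : FirstOrder.Language) [L.Structure R]

lemma isDef_reindex {n m : ℕ} (f : Fin n → Fin m) {S : Set (Fin n → R)} (h : IsDefinable L S) :
    IsDefinable L {w : Fin m → R | w ∘ f ∈ S} :=
  Set.Definable.preimage_comp f h

lemma isDef_inter {n : ℕ} {S T : Set (Fin n → R)} (hS : IsDefinable L S) (hT : IsDefinable L T) :
    IsDefinable L (S ∩ T) := Set.Definable.inter hS hT

lemma isDef_compl {n : ℕ} {S : Set (Fin n → R)} (hS : IsDefinable L S) :
    IsDefinable L Sᶜ := Set.Definable.compl hS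

lemma isDef_congr {n : ℕ} {S T : Set (Fin n → R)} (hS : IsDefinable L S) (h : T = S) :
    IsDefinable L T := h ▸ hS

lemma isDef_eqConst {n : ℕ} (i : Fin n) (c : R) : IsDefinable L {v : Fin n → R | v i = c} := by
  refine ⟨Language.Term.equal (Language.Term.var i)
    ((L.con (⟨c, Set.mem_univ c⟩ : (Set.univ : Set R))).term), ?_⟩
  ext v
  simp [Language.Term.equal, Language.Formula.Realize,
    FirstOrder.Language.funMap_eq_coe_constants, FirstOrder.Language.coe_con]

lemma isDef_exists_snoc {n : ℕ} {S : Set (Fin (n+1) → R)} (h : IsDefinable L S) :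
    IsDefinable L {v : Fin n → R | ∃ t, Fin.snoc v t ∈ S} := by
  have h2 := Set.Definable.image_comp h (Fin.castSucc : Fin n → Fin (n+1))
  unfold IsDefinable
  convert h2 using 1
  ext v
  constructor
  · rintro ⟨t, ht⟩
    exact ⟨Fin.snoc v t, ht, by ext i; simp⟩
  · rintro ⟨w, hw, rfl⟩
    refine ⟨w (Fin.last n), ?_⟩
    convert hw
    ext i
    refine Fin.lastCases ?_ ?_ i <;> simp

lemma isDef_forall_snoc {n : ℕ} {S : Set (Fin (n+1) → R)} (h : IsDefinable L S) :
    IsDefinable L {v : Fin n → R | ∀ t, Fin.snoc v t ∈ S} := by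
  have h2 := isDef_compl L (isDef_exists_snoc L (isDef_compl L h))
  refine isDef_congr L h2 ?_
  ext v
  simp

lemma isDef_exists_append {n : ℕ} : ∀ (k : ℕ) {S : Set (Fin (n+k) → R)},
    IsDefinable L S → IsDefinable L {v : Fin n → R | ∃ y : Fin k → R, Fin.append v y ∈ S} := by
  intro k
  induction k with
  | zero =>
    intro S h
    have h2 := isDef_reindex L (Fin.cast (Nat.add_zero n) : Fin (n+0) → Fin n) h
    refine isDef_congr L h2 ?_
    ext v
    constructor
    · rintro ⟨y, hy⟩
      have : Fin.append v y = v ∘ Fin.cast (Nat.add_zero n) := by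
        have : y = Fin.elim0 := funext fun i => i.elim0
        rw [this, Fin.append_elim0]
      rwa [this] at hy
    · intro hv
      refine ⟨Fin.elim0, ?_⟩
      rw [Fin.append_elim0]
      exact hv
  | succ k ih =>
    intro S h
    have h1 : IsDefinable L {w : Fin (n+k) → R | ∃ t, Fin.snoc w t ∈ S} :=
      isDef_exists_snoc L h
    have h2 := ih h1
    refine isDef_congr L h2 ?_
    ext v
    constructor
    · rintro ⟨y, hy⟩
      refine ⟨y ∘ Fin.castSucc, y (Fin.last k), ?_⟩
      have hy' : Fin.snoc (y ∘ Fin.castSucc) (y (Fin.last k)) = y := by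
        ext i
        refine Fin.lastCases ?_ ?_ i <;> simp
      have : Fin.snoc (Fin.append v (y ∘ Fin.castSucc)) (y (Fin.last k)) = Fin.append v y := by
        rw [← Fin.append_snoc, hy']
      rwa [this]
    · rintro ⟨y', t, ht⟩
      exact ⟨Fin.snoc y' t, by rwa [Fin.append_snoc]⟩

end Toolkit

section Atoms
variable {R : Type*} (L : FirstOrder.Language) [L.Structure R]

lemma isDef_ltVar [LT R] (hlt : IsDefinable L {v : Fin 2 → R | v 0 < v 1}) {n : ℕ}
    (i j : Fin n) : IsDefinable L {v : Fin n → R | v i < v j} := by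
  refine isDef_congr L (isDef_reindex L ![i,j] hlt) ?_
  ext w
  simp [Set.mem_setOf_eq, Function.comp]

lemma isDef_addVar [Add R] (hadd : IsDefinable L {v : Fin 3 → R | v 0 + v 1 = v 2}) {n : ℕ}
    (i j k : Fin n) : IsDefinable L {v : Fin n → R | v i + v j = v k} := by
  refine isDef_congr L (isDef_reindex L ![i,j,k] hadd) ?_
  ext w
  simp [Set.mem_setOf_eq, Function.comp]

lemma isDef_ltConst [LT R] (hlt : IsDefinable L {v : Fin 2 → R | v 0 < v 1}) {n : ℕ}
    (i : Fin n) (c : R) : IsDefinable L {v : Fin n → R | v i < c} := by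
  have h1 : IsDefinable L ({u : Fin (n+1) → R | u (Fin.last n) = c} ∩
      {u : Fin (n+1) → R | u i.castSucc < u (Fin.last n)}) :=
    isDef_inter L (isDef_eqConst L _ c) (isDef_ltVar L hlt _ _)
  refine isDef_congr L (isDef_exists_snoc L h1) ?_
  ext v
  constructor
  · intro hv
    exact ⟨c, by simp, by simp only [Set.mem_setOf_eq, Fin.snoc_last, Fin.snoc_castSucc]; exact hv⟩
  · rintro ⟨t, ht1, ht2⟩
    simp only [Set.mem_setOf_eq, Fin.snoc_last, Fin.snoc_castSucc] at ht1 ht2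
    rwa [ht1] at ht2

lemma isDef_constLt [LT R] (hlt : IsDefinable L {v : Fin 2 → R | v 0 < v 1}) {n : ℕ}
    (c : R) (i : Fin n) : IsDefinable L {v : Fin n → R | c < v i} := by
  have h1 : IsDefinable L ({u : Fin (n+1) → R | u (Fin.last n) = c} ∩
      {u : Fin (n+1) → R | u (Fin.last n) < u i.castSucc}) :=
    isDef_inter L (isDef_eqConst L _ c) (isDef_ltVar L hlt _ _)
  refine isDef_congr L (isDef_exists_snoc L h1) ?_
  ext v
  constructor
  · intro hv
    exact ⟨c, by simp, by simp only [Set.mem_setOf_eq, Fin.snoc_last, Fin.snoc_castSucc]; exact hv⟩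
  · rintro ⟨t, ht1, ht2⟩
    simp only [Set.mem_setOf_eq, Fin.snoc_last, Fin.snoc_castSucc] at ht1 ht2
    rwa [ht1] at ht2

lemma isDef_leConst [LinearOrder R] (hlt : IsDefinable L {v : Fin 2 → R | v 0 < v 1}) {n : ℕ}
    (i : Fin n) (c : R) : IsDefinable L {v : Fin n → R | v i ≤ c} := by
  refine isDef_congr L (isDef_compl L (isDef_constLt L hlt c i)) ?_
  ext v
  simp [Set.mem_setOf_eq, not_lt]

lemma isDef_constLe [LinearOrder R] (hlt : IsDefinable L {v : Fin 2 → R | v 0 < v 1}) {n : ℕ}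
    (c : R) (i : Fin n) : IsDefinable L {v : Fin n → R | c ≤ v i} := by
  refine isDef_congr L (isDef_compl L (isDef_ltConst L hlt i c)) ?_
  ext v
  simp [Set.mem_setOf_eq, not_lt]

/-- Definability of the fiber of a definable set, coded as a subset of `Fin 1 → R`. -/
lemma isDef_fiber1 {M : ℕ} {X : Set (Fin (M+1) → R)} (hX : IsDefinable L X) (x : Fin M → R) :
    IsDefinable L {v : Fin 1 → R | v 0 ∈ fiber1 X x} := by
  classical
  have h1 : IsDefinable L (X ∩ ⋂ i ∈ (Finset.univ : Finset (Fin M)),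
      {w : Fin (M+1) → R | w i.castSucc = x i}) :=
    isDef_inter L hX (Set.definable_biInter_finset (fun i => isDef_eqConst L _ (x i)) _)
  have h2 := Set.Definable.image_comp h1 (fun _ : Fin 1 => Fin.last M)
  refine isDef_congr L h2 ?_
  ext v
  constructor
  · intro hv
    refine ⟨Fin.snoc x (v 0), ⟨hv, ?_⟩, ?_⟩
    · simp
    · ext j
      have : j = 0 := Subsingleton.elim _ _
      subst this
      simp
  · rintro ⟨g, ⟨hg1, hg2⟩, rfl⟩
    simp only [Set.mem_iInter, Finset.mem_univ, forall_true_left, Set.mem_setOf_eq] at hg2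
    have hgx : Fin.snoc x (g (Fin.last M)) = g := by
      ext j
      refine Fin.lastCases ?_ ?_ j
      · simp
      · intro i
        simp [hg2 i]
    show Fin.snoc x ((g ∘ fun _ : Fin 1 => Fin.last M) 0) ∈ X
    simpa [hgx] using hg1

/-- Definability of the `n`-dimensional fiber of a definable set. -/
lemma isDef_fiberN {m n : ℕ} {X : Set (Fin (m+n) → R)} (hX : IsDefinable L X) (x : Fin m → R) :
    IsDefinable L (fiberN X x) := by
  classical
  have h1 : IsDefinable L (X ∩ ⋂ i ∈ (Finset.univ : Finset (Fin m)),
      {w : Fin (m+n) → R | w (Fin.castAdd n i) = x i}) :=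
    isDef_inter L hX (Set.definable_biInter_finset (fun i => isDef_eqConst L _ (x i)) _)
  have h2 := Set.Definable.image_comp h1 (fun i : Fin n => Fin.natAdd m i)
  refine isDef_congr L h2 ?_
  ext y
  constructor
  · intro hy
    refine ⟨Fin.append x y, ⟨hy, ?_⟩, ?_⟩
    · simp [Fin.append_left]
    · ext j
      simp [Fin.append_right]
  · rintro ⟨g, ⟨hg1, hg2⟩, rfl⟩
    simp only [Set.mem_iInter, Finset.mem_univ, forall_true_left, Set.mem_setOf_eq] at hg2
    have hgx : Fin.append x (g ∘ Fin.natAdd m) = g := by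
      ext j
      refine Fin.addCases ?_ ?_ j
      · intro i
        simp [Fin.append_left, hg2 i]
      · intro i
        simp [Fin.append_right]
    show Fin.append x (g ∘ Fin.natAdd m) ∈ X
    rwa [hgx]

end Atoms

section OrderHelpers
variable {R : Type*} [LinearOrder R] [AddCommGroup R] [CovariantClass R R (· + ·) (· < ·)]

/-- Bundle the unbundled hypotheses into a `LinearOrderedAddCommGroup`. -/
def lagOf (R : Type*) [LinearOrder R] [AddCommGroup R] [CovariantClass R R (· + ·) (· < ·)] :
    IsOrderedAddMonoid R :=
  { add_le_add_left := fun a b h c => by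
      rcases lt_or_eq_of_le h with h' | h'
      · rw [add_comm a c, add_comm b c]; exact (CovariantClass.elim c h').le
      · rw [h'] }

lemma exists_pos_of_nontrivial (R : Type*) [LinearOrder R] [AddCommGroup R]
    [CovariantClass R R (· + ·) (· < ·)] [Nontrivial R] : ∃ g : R, 0 < g := by
  letI := lagOf R
  obtain ⟨x, hx⟩ := exists_ne (0 : R)
  rcases hx.lt_or_gt with h | h
  · exact ⟨-x, neg_pos.2 h⟩
  · exact ⟨x, h⟩

lemma noMaxOrder_of_nontrivial (R : Type*) [LinearOrder R] [AddCommGroup R]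
    [CovariantClass R R (· + ·) (· < ·)] [Nontrivial R] : NoMaxOrder R := by
  letI := lagOf R
  obtain ⟨g, hg⟩ := exists_pos_of_nontrivial R
  exact ⟨fun a => ⟨a + g, lt_add_of_pos_right a hg⟩⟩

lemma noMinOrder_of_nontrivial (R : Type*) [LinearOrder R] [AddCommGroup R]
    [CovariantClass R R (· + ·) (· < ·)] [Nontrivial R] : NoMinOrder R := by
  letI := lagOf R
  obtain ⟨g, hg⟩ := exists_pos_of_nontrivial R
  exact ⟨fun a => ⟨a - g, sub_lt_self a hg⟩⟩

lemma exists_pos_min {n : ℕ} (e : Fin n → R) (he : ∀ i, 0 < e i) (hpos : ∃ g : R, 0 < g) :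
    ∃ ε : R, 0 < ε ∧ ∀ i, ε ≤ e i := by
  cases isEmpty_or_nonempty (Fin n) with
  | inl h =>
    obtain ⟨g, hg⟩ := hpos
    exact ⟨g, hg, fun i => isEmptyElim i⟩
  | inr h =>
    refine ⟨Finset.univ.inf' Finset.univ_nonempty e, ?_, fun i => Finset.inf'_le _ (Finset.mem_univ i)⟩
    rw [Finset.lt_inf'_iff]
    exact fun i _ => he i

end OrderHelpers

section TopHelpers
variable {R : Type*} [LinearOrder R] [TopologicalSpace R] [OrderTopology R]

lemma isOpen_box {n : ℕ} (c d : Fin n → R) :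
    IsOpen {x : Fin n → R | ∀ i, c i < x i ∧ x i < d i} := by
  have : {x : Fin n → R | ∀ i, c i < x i ∧ x i < d i}
      = ⋂ i, ((fun x : Fin n → R => x i) ⁻¹' (Set.Ioo (c i) (d i))) := by
    ext x
    simp [Set.mem_iInter, Set.mem_Ioo]
  rw [this]
  exact isOpen_iInter_of_finite fun i => (continuous_apply i).isOpen_preimage _ isOpen_Ioo

lemma isClosed_box {n : ℕ} (c d : Fin n → R) :
    IsClosed {x : Fin n → R | ∀ i, c i ≤ x i ∧ x i ≤ d i} := by
  have : {x : Fin n → R | ∀ i, c i ≤ x i ∧ x i ≤ d i}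
      = ⋂ i, ((fun x : Fin n → R => x i) ⁻¹' (Set.Icc (c i) (d i))) := by
    ext x
    simp [Set.mem_iInter, Set.mem_Icc]
  rw [this]
  exact isClosed_iInter fun i => IsClosed.preimage (continuous_apply i) isClosed_Icc

lemma continuous_snoc {n : ℕ} (y : Fin n → R) :
    Continuous (fun t : R => (Fin.snoc y t : Fin (n+1) → R)) := by
  refine continuous_pi fun j => ?_
  refine Fin.lastCases ?_ ?_ j
  · simp only [Fin.snoc_last]
    exact continuous_id
  · intro i
    simp only [Fin.snoc_castSucc]
    exact continuous_const

end TopHelpers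

section TopHelpers2
variable {α : Type*} [TopologicalSpace α]

lemma DiscreteSet.mono {S' S : Set α} (hsub : S' ⊆ S) (h : DiscreteSet S) : DiscreteSet S' := by
  intro y hy
  obtain ⟨U, hU, hyU, hUS⟩ := h y (hsub hy)
  refine ⟨U, hU, hyU, ?_⟩
  apply Set.Subset.antisymm
  · intro w hw
    have : w ∈ U ∩ S := ⟨hw.1, hsub hw.2⟩
    rw [hUS] at this
    exact this
  · rintro w rfl
    exact ⟨hyU, hy⟩

end TopHelpers2

section GroupTop
variable {R : Type*} [LinearOrder R] [AddCommGroup R] [CovariantClass R R (· + ·) (· < ·)]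
  [TopologicalSpace R] [OrderTopology R]

lemma approx_of_mem_closure {n : ℕ} {S : Set (Fin n → R)} {z : Fin n → R}
    (hz : z ∈ closure S) : ∀ ε > (0:R), ∃ w ∈ S, ∀ i, z i - ε < w i ∧ w i < z i + ε := by
  letI := lagOf R
  intro ε hε
  have hbox : IsOpen {x : Fin n → R | ∀ i, z i - ε < x i ∧ x i < z i + ε} :=
    isOpen_box _ _
  have hzbox : z ∈ {x : Fin n → R | ∀ i, z i - ε < x i ∧ x i < z i + ε} :=
    fun i => ⟨sub_lt_self _ hε, lt_add_of_pos_right _ hε⟩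
  obtain ⟨w, hw1, hw2⟩ := mem_closure_iff.1 hz _ hbox hzbox
  exact ⟨w, hw2, hw1⟩

lemma mem_closure_of_approx {n : ℕ} [NoMaxOrder R] [NoMinOrder R] (hpos : ∃ g : R, 0 < g)
    {S : Set (Fin n → R)} {z : Fin n → R}
    (h : ∀ ε > (0:R), ∃ w ∈ S, ∀ i, z i - ε < w i ∧ w i < z i + ε) : z ∈ closure S := by
  letI := lagOf R
  rw [mem_closure_iff]
  intro O hO hzO
  obtain ⟨I, u, hIu, hsub⟩ := isOpen_pi_iff.1 hO z hzO
  have key : ∀ i : Fin n, ∃ e : R, 0 < e ∧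
      ∀ w : R, z i - e < w → w < z i + e → (i ∈ I → w ∈ u i) := by
    intro i
    by_cases hi : i ∈ I
    · have hu := hIu i hi
      have hnhds : u i ∈ nhds (z i) := hu.1.mem_nhds hu.2
      obtain ⟨⟨l, r⟩, ⟨hl, hr⟩, hIoo⟩ := (nhds_basis_Ioo (z i)).mem_iff.1 hnhds
      refine ⟨min (z i - l) (r - z i), lt_min (sub_pos.2 hl) (sub_pos.2 hr), ?_⟩
      intro w hw1 hw2 _
      apply hIoo
      constructor
      · have : z i - (z i - l) ≤ z i - min (z i - l) (r - z i) :=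
          sub_le_sub_left (min_le_left _ _) _
        simp only [sub_sub_cancel] at this
        exact lt_of_le_of_lt this hw1
      · have : z i + min (z i - l) (r - z i) ≤ z i + (r - z i) :=
          add_le_add_right (min_le_right _ _) _
        rw [add_sub_cancel] at this
        exact lt_of_lt_of_le hw2 this
    · obtain ⟨g, hg⟩ := hpos
      exact ⟨g, hg, fun w _ _ hmem => absurd hmem hi⟩
  choose e he1 he2 using key
  obtain ⟨ε, hε, hεe⟩ := exists_pos_min e he1 hpos
  obtain ⟨w, hwS, hw⟩ := h ε hε
  refine ⟨w, ?_, hwS⟩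
  apply hsub
  intro i hi
  refine he2 i (w i) ?_ ?_ hi
  · exact lt_of_le_of_lt (sub_le_sub_left (hεe i) _) (hw i).1
  · exact lt_of_lt_of_le (hw i).2 (add_le_add_right (hεe i) _)

end GroupTop

set_option linter.unusedSectionVars false

section SnocSimp
variable {R : Type*}

@[simp] lemma snoc1_zero (v : Fin 1 → R) (t : R) : (Fin.snoc v t : Fin 2 → R) 0 = v 0 := by
  have := Fin.snoc_castSucc (α := fun _ : Fin 2 => R) t v 0
  simpa using this

@[simp] lemma snoc1_one (v : Fin 1 → R) (t : R) : (Fin.snoc v t : Fin 2 → R) 1 = t := by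
  have h : (1 : Fin 2) = Fin.last 1 := rfl
  rw [h, Fin.snoc_last]

@[simp] lemma snoc2_zero (v : Fin 2 → R) (t : R) : (Fin.snoc v t : Fin 3 → R) 0 = v 0 := by
  have := Fin.snoc_castSucc (α := fun _ : Fin 3 => R) t v 0
  simpa using this

@[simp] lemma snoc2_one (v : Fin 2 → R) (t : R) : (Fin.snoc v t : Fin 3 → R) 1 = v 1 := by
  have := Fin.snoc_castSucc (α := fun _ : Fin 3 => R) t v 1
  simpa using this

@[simp] lemma snoc2_two (v : Fin 2 → R) (t : R) : (Fin.snoc v t : Fin 3 → R) 2 = t := by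
  have h : (2 : Fin 3) = Fin.last 2 := rfl
  rw [h, Fin.snoc_last]

end SnocSimp

section DCHelpers
variable {R : Type*} (L : FirstOrder.Language) [L.Structure R] [LinearOrder R]

lemma isDef_mem1 {S : Set R} (h : IsDefinable L {v : Fin 1 → R | v 0 ∈ S}) {n : ℕ} (i : Fin n) :
    IsDefinable L {v : Fin n → R | v i ∈ S} := by
  refine isDef_congr L (isDef_reindex L ![i] h) ?_
  ext w
  simp [Set.mem_setOf_eq, Function.comp]

lemma isDef_lowerBounds (hlt : IsDefinable L {v : Fin 2 → R | v 0 < v 1})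
    {S : Set R} (h : IsDefinable L {v : Fin 1 → R | v 0 ∈ S}) :
    IsDefinable L {v : Fin 1 → R | v 0 ∈ lowerBounds S} := by
  have hin : IsDefinable L ({w : Fin 2 → R | w 1 ∈ S} ∩ {w : Fin 2 → R | w 1 < w 0}) :=
    isDef_inter L (isDef_mem1 L h 1) (isDef_ltVar L hlt 1 0)
  refine isDef_congr L (isDef_compl L (isDef_exists_snoc L hin)) ?_
  ext v
  simp only [Set.mem_compl_iff, Set.mem_setOf_eq, Set.mem_inter_iff, not_exists, not_and,
    Fin.isValue, snoc1_zero, snoc1_one, lowerBounds, Set.mem_setOf_eq]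
  constructor
  · intro hv t ht
    exact not_lt.2 (hv ht)
  · intro hv t ht
    exact not_lt.1 (hv t ht)

lemma dc_sup (hDC : DCProp L R) {S : Set R} (hdef : IsDefinable L {v : Fin 1 → R | v 0 ∈ S})
    (hne : S.Nonempty) (hbdd : BddAbove S) : ∃ a : R, IsLUB S a :=
  hDC S hdef hne hbdd

lemma dc_inf (hDC : DCProp L R) (hlt : IsDefinable L {v : Fin 2 → R | v 0 < v 1})
    {S : Set R} (hdef : IsDefinable L {v : Fin 1 → R | v 0 ∈ S})
    (hne : S.Nonempty) (hbdd : BddBelow S) : ∃ a : R, IsGLB S a := by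
  obtain ⟨s, hs⟩ := hne
  obtain ⟨b, hb⟩ := hbdd
  obtain ⟨a, ha⟩ := hDC (lowerBounds S) (isDef_lowerBounds L hlt hdef) ⟨b, hb⟩
    ⟨s, fun t ht => ht hs⟩
  refine ⟨a, ?_, ?_⟩
  · intro x hx
    exact ha.2 fun t ht => ht hx
  · intro t ht
    exact ha.1 ht

end DCHelpers

section Engine
variable {R : Type*} (L : FirstOrder.Language) [L.Structure R] [LinearOrder R]
  [DenselyOrdered R] [TopologicalSpace R] [OrderTopology R] [NoMaxOrder R] [NoMinOrder R]

lemma engine (hlt : IsDefinable L {v : Fin 2 → R | v 0 < v 1}) (hDC : DCProp L R)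
    {Y : Set R} (hYdef : IsDefinable L {v : Fin 1 → R | v 0 ∈ Y})
    (hYcl : IsClosed Y) (hYdisc : DiscreteSet Y)
    {α p q : R} (hpα : p < α) (hαq : α < q) {N : ℕ}
    (hdich : ∀ p' q', p ≤ p' → p' < α → α < q' → q' ≤ q →
      (Y ∩ Set.Icc p' q').Infinite ∨ (Y ∩ Set.Icc p' q').ncard ≤ N) :
    (Y ∩ Set.Icc p q).Finite := by
  by_contra hfin
  have hinf : (Y ∩ Set.Icc p q).Infinite := hfin
  -- isolation of α
  have hiso : ∃ s t : R, p ≤ s ∧ s < α ∧ α < t ∧ t ≤ q ∧ ∀ w ∈ Y ∩ Set.Ioo s t, w = α := by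
    by_cases hα : α ∈ Y
    · obtain ⟨U, hU, hαU, hUY⟩ := hYdisc α hα
      obtain ⟨⟨l, r⟩, ⟨hl, hr⟩, hIoo⟩ := (nhds_basis_Ioo α).mem_iff.1 (hU.mem_nhds hαU)
      refine ⟨max l p, min r q, le_max_right _ _, max_lt hl hpα, lt_min hr hαq,
        min_le_right _ _, ?_⟩
      rintro w ⟨hwY, hw1, hw2⟩
      have hwU : w ∈ U := hIoo ⟨lt_of_le_of_lt (le_max_left l p) hw1,
        lt_of_lt_of_le hw2 (min_le_left r q)⟩
      have : w ∈ U ∩ Y := ⟨hwU, hwY⟩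
      rw [hUY] at this
      exact this
    · have hU : Yᶜ ∈ nhds α := hYcl.isOpen_compl.mem_nhds hα
      obtain ⟨⟨l, r⟩, ⟨hl, hr⟩, hIoo⟩ := (nhds_basis_Ioo α).mem_iff.1 hU
      refine ⟨max l p, min r q, le_max_right _ _, max_lt hl hpα, lt_min hr hαq,
        min_le_right _ _, ?_⟩
      rintro w ⟨hwY, hw1, hw2⟩
      exact absurd hwY (hIoo ⟨lt_of_le_of_lt (le_max_left l p) hw1,
        lt_of_lt_of_le hw2 (min_le_left r q)⟩)
  obtain ⟨s, t, hps, hsα, hαt, htq, hmid⟩ := hiso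
  -- one of the two sides carries infinite mass
  have hcase : (Y ∩ Set.Icc p s).Infinite ∨ (Y ∩ Set.Icc t q).Infinite := by
    by_contra hc
    push_neg at hc
    have hmidfin : (Y ∩ Set.Ioo s t).Finite :=
      (Set.finite_singleton α).subset (fun w hw => hmid w hw)
    have : (Y ∩ Set.Icc p q).Finite := by
      refine ((hc.1.union hmidfin).union hc.2).subset ?_
      rintro w ⟨hwY, hw1, hw2⟩
      rcases le_or_gt w s with h1 | h1
      · exact Or.inl (Or.inl ⟨hwY, hw1, h1⟩)
      · rcases lt_or_ge w t with h2 | h2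
        · exact Or.inl (Or.inr ⟨hwY, h1, h2⟩)
        · exact Or.inr ⟨hwY, h2, hw2⟩
    exact hinf this
  rcases hcase with hW | hW
  · -- LEFT case
    set W := Y ∩ Set.Icc p s with hWdef
    have hWcoded : IsDefinable L {v : Fin 1 → R | v 0 ∈ W} := by
      have h1 := isDef_inter L (isDef_inter L hYdef (isDef_constLe L hlt p 0))
        (isDef_leConst L hlt 0 s)
      refine isDef_congr L h1 ?_
      ext v
      simp [hWdef, Set.mem_Icc, and_assoc]
    have hWIiocoded : ∀ e : R, IsDefinable L {v : Fin 1 → R | v 0 ∈ W ∩ Set.Iio e} := by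
      intro e
      have h1 := isDef_inter L hWcoded (isDef_ltConst L hlt 0 e)
      refine isDef_congr L h1 ?_
      ext v
      simp [Set.mem_Iio]
    have hWcl : IsClosed W := hYcl.inter isClosed_Icc
    have hWY : W ⊆ Y := Set.inter_subset_left
    have main : ∀ j : ℕ, ∃ F : Finset R, F.card = j + 1 ∧ ↑F ⊆ W ∧
        ∃ emin : R, emin ∈ F ∧ W ∩ Set.Ici emin = ↑F := by
      intro j
      induction j with
      | zero =>
        obtain ⟨e₀, he₀⟩ := dc_sup L hDC hWcoded hW.nonempty ⟨s, fun w hw => hw.2.2⟩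
        have he₀W : e₀ ∈ W := by
          have := he₀.mem_closure hW.nonempty
          rwa [hWcl.closure_eq] at this
        refine ⟨{e₀}, Finset.card_singleton _, by simpa using he₀W, e₀,
          Finset.mem_singleton_self _, ?_⟩
        ext w
        simp only [Set.mem_inter_iff, Set.mem_Ici, Finset.coe_singleton, Set.mem_singleton_iff]
        constructor
        · rintro ⟨hwW, hwe⟩
          exact le_antisymm (he₀.1 hwW) hwe
        · rintro rfl
          exact ⟨he₀W, le_refl _⟩
      | succ j ih =>
        obtain ⟨F, hcard, hFW, emin, heminF, hFeq⟩ := ih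
        have hne' : (W ∩ Set.Iio emin).Nonempty := by
          obtain ⟨w, hwW, hwF⟩ := (hW.diff F.finite_toSet).nonempty
          refine ⟨w, hwW, ?_⟩
          by_contra hlt'
          have hge' : emin ≤ w := not_lt.1 (by simpa [Set.mem_Iio] using hlt')
          exact hwF (by rw [← hFeq]; exact ⟨hwW, hge'⟩)
        obtain ⟨e', he'⟩ := dc_sup L hDC (hWIiocoded emin) hne'
          ⟨emin, fun w hw => hw.2.le⟩
        have he'W : e' ∈ W := by
          have h1 := he'.mem_closure hne'
          have h2 := closure_mono (Set.inter_subset_left : W ∩ Set.Iio emin ⊆ W) h1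
          rwa [hWcl.closure_eq] at h2
        have he'le : e' ≤ emin := he'.2 fun w hw => hw.2.le
        have he'lt : e' < emin := by
          rcases lt_or_eq_of_le he'le with h | h
          · exact h
          · exfalso
            obtain ⟨U, hU, heU, hUY⟩ := hYdisc emin (hWY (hFW heminF))
            have hcl : emin ∈ closure (W ∩ Set.Iio emin) := h ▸ he'.mem_closure hne'
            obtain ⟨w, hwU, hwW, hwlt⟩ := mem_closure_iff.1 hcl U hU heU
            have : w ∈ U ∩ Y := ⟨hwU, hWY hwW⟩
            rw [hUY] at this
            rw [this] at hwlt
            exact lt_irrefl _ hwlt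
        have he'F : e' ∉ F := by
          intro hmem
          have : e' ∈ W ∩ Set.Ici emin := by rw [hFeq]; exact hmem
          exact absurd this.2 (not_le.2 he'lt)
        refine ⟨insert e' F, ?_, ?_, e', Finset.mem_insert_self _ _, ?_⟩
        · rw [Finset.card_insert_of_notMem he'F, hcard]
        · intro w hw
          rcases Finset.mem_insert.1 hw with rfl | hw'
          · exact he'W
          · exact hFW hw'
        · ext w
          simp only [Set.mem_inter_iff, Set.mem_Ici, Finset.coe_insert, Set.mem_insert_iff]
          constructor
          · rintro ⟨hwW, hwe⟩
            rcases lt_or_ge w emin with h1 | h1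
            · left
              exact le_antisymm (he'.1 ⟨hwW, h1⟩) hwe
            · right
              have : w ∈ W ∩ Set.Ici emin := ⟨hwW, h1⟩
              rw [hFeq] at this
              exact this
          · rintro (rfl | hw')
            · exact ⟨he'W, le_refl _⟩
            · have : w ∈ W ∩ Set.Ici emin := by rw [hFeq]; exact hw'
              exact ⟨this.1, le_trans he'le this.2⟩
    obtain ⟨F, hcard, hFW, emin, heminF, hFeq⟩ := main N
    obtain ⟨t', hαt', ht't⟩ := exists_between hαt
    have heminW : emin ∈ W := hFW heminF
    have hd := hdich emin t' heminW.2.1 (lt_of_le_of_lt heminW.2.2 hsα) hαt'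
      (le_trans ht't.le htq)
    have hEsub : Y ∩ Set.Icc emin t' ⊆ ↑F ∪ {α} := by
      rintro w ⟨hwY, hw1, hw2⟩
      rcases le_or_gt w s with h1 | h1
      · left
        rw [← hFeq]
        exact ⟨⟨hwY, le_trans heminW.2.1 hw1, h1⟩, hw1⟩
      · right
        exact hmid w ⟨hwY, h1, lt_of_le_of_lt hw2 ht't⟩
    have hEfin : (Y ∩ Set.Icc emin t').Finite :=
      (F.finite_toSet.union (Set.finite_singleton α)).subset hEsub
    have hFE : ↑F ⊆ Y ∩ Set.Icc emin t' := by
      intro w hw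
      have hw' : w ∈ W ∩ Set.Ici emin := by rw [hFeq]; exact hw
      exact ⟨hWY hw'.1, hw'.2, le_trans hw'.1.2.2 (le_of_lt (lt_trans hsα hαt'))⟩
    have hge : N + 1 ≤ (Y ∩ Set.Icc emin t').ncard := by
      have h1 := Set.ncard_le_ncard hFE hEfin
      rwa [Set.ncard_coe_finset, hcard] at h1
    rcases hd with hd | hd
    · exact hd hEfin
    · omega
  · -- RIGHT case (mirror)
    set W := Y ∩ Set.Icc t q with hWdef
    have hWcoded : IsDefinable L {v : Fin 1 → R | v 0 ∈ W} := by
      have h1 := isDef_inter L (isDef_inter L hYdef (isDef_constLe L hlt t 0))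
        (isDef_leConst L hlt 0 q)
      refine isDef_congr L h1 ?_
      ext v
      simp [hWdef, Set.mem_Icc, and_assoc]
    have hWIoicoded : ∀ e : R, IsDefinable L {v : Fin 1 → R | v 0 ∈ W ∩ Set.Ioi e} := by
      intro e
      have h1 := isDef_inter L hWcoded (isDef_constLt L hlt e 0)
      refine isDef_congr L h1 ?_
      ext v
      simp [Set.mem_Ioi]
    have hWcl : IsClosed W := hYcl.inter isClosed_Icc
    have hWY : W ⊆ Y := Set.inter_subset_left
    have main : ∀ j : ℕ, ∃ F : Finset R, F.card = j + 1 ∧ ↑F ⊆ W ∧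
        ∃ emax : R, emax ∈ F ∧ W ∩ Set.Iic emax = ↑F := by
      intro j
      induction j with
      | zero =>
        obtain ⟨e₀, he₀⟩ := dc_inf L hDC hlt hWcoded hW.nonempty ⟨t, fun w hw => hw.2.1⟩
        have he₀W : e₀ ∈ W := by
          have := he₀.mem_closure hW.nonempty
          rwa [hWcl.closure_eq] at this
        refine ⟨{e₀}, Finset.card_singleton _, by simpa using he₀W, e₀,
          Finset.mem_singleton_self _, ?_⟩
        ext w
        simp only [Set.mem_inter_iff, Set.mem_Iic, Finset.coe_singleton, Set.mem_singleton_iff]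
        constructor
        · rintro ⟨hwW, hwe⟩
          exact le_antisymm hwe (he₀.1 hwW)
        · rintro rfl
          exact ⟨he₀W, le_refl _⟩
      | succ j ih =>
        obtain ⟨F, hcard, hFW, emax, hemaxF, hFeq⟩ := ih
        have hne' : (W ∩ Set.Ioi emax).Nonempty := by
          obtain ⟨w, hwW, hwF⟩ := (hW.diff F.finite_toSet).nonempty
          refine ⟨w, hwW, ?_⟩
          by_contra hlt'
          have hle' : w ≤ emax := not_lt.1 (by simpa [Set.mem_Ioi] using hlt')
          exact hwF (by rw [← hFeq]; exact ⟨hwW, hle'⟩)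
        obtain ⟨e', he'⟩ := dc_inf L hDC hlt (hWIoicoded emax) hne'
          ⟨emax, fun w hw => hw.2.le⟩
        have he'W : e' ∈ W := by
          have h1 := he'.mem_closure hne'
          have h2 := closure_mono (Set.inter_subset_left : W ∩ Set.Ioi emax ⊆ W) h1
          rwa [hWcl.closure_eq] at h2
        have he'le : emax ≤ e' := he'.2 fun w hw => hw.2.le
        have he'lt : emax < e' := by
          rcases lt_or_eq_of_le he'le with h | h
          · exact h
          · exfalso
            obtain ⟨U, hU, heU, hUY⟩ := hYdisc emax (hWY (hFW hemaxF))
            have hcl : emax ∈ closure (W ∩ Set.Ioi emax) := h ▸ he'.mem_closure hne'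
            obtain ⟨w, hwU, hwW, hwlt⟩ := mem_closure_iff.1 hcl U hU heU
            have : w ∈ U ∩ Y := ⟨hwU, hWY hwW⟩
            rw [hUY] at this
            rw [this] at hwlt
            exact lt_irrefl _ hwlt
        have he'F : e' ∉ F := by
          intro hmem
          have : e' ∈ W ∩ Set.Iic emax := by rw [hFeq]; exact hmem
          exact absurd this.2 (not_le.2 he'lt)
        refine ⟨insert e' F, ?_, ?_, e', Finset.mem_insert_self _ _, ?_⟩
        · rw [Finset.card_insert_of_notMem he'F, hcard]
        · intro w hw
          rcases Finset.mem_insert.1 hw with rfl | hw'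
          · exact he'W
          · exact hFW hw'
        · ext w
          simp only [Set.mem_inter_iff, Set.mem_Iic, Finset.coe_insert, Set.mem_insert_iff]
          constructor
          · rintro ⟨hwW, hwe⟩
            rcases lt_or_ge emax w with h1 | h1
            · left
              exact le_antisymm hwe (he'.1 ⟨hwW, h1⟩)
            · right
              have : w ∈ W ∩ Set.Iic emax := ⟨hwW, h1⟩
              rw [hFeq] at this
              exact this
          · rintro (rfl | hw')
            · exact ⟨he'W, le_refl _⟩
            · have : w ∈ W ∩ Set.Iic emax := by rw [hFeq]; exact hw'
              exact ⟨this.1, le_trans this.2 he'le⟩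
    obtain ⟨F, hcard, hFW, emax, hemaxF, hFeq⟩ := main N
    obtain ⟨t', hst', ht'α⟩ := exists_between hsα
    have hemaxW : emax ∈ W := hFW hemaxF
    have hd := hdich t' emax (le_trans hps hst'.le) ht'α
      (lt_of_lt_of_le hαt hemaxW.2.1) hemaxW.2.2
    have hEsub : Y ∩ Set.Icc t' emax ⊆ ↑F ∪ {α} := by
      rintro w ⟨hwY, hw1, hw2⟩
      rcases le_or_gt t w with h1 | h1
      · left
        rw [← hFeq]
        exact ⟨⟨hwY, h1, le_trans hw2 hemaxW.2.2⟩, hw2⟩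
      · right
        exact hmid w ⟨hwY, lt_of_lt_of_le hst' hw1, h1⟩
    have hEfin : (Y ∩ Set.Icc t' emax).Finite :=
      (F.finite_toSet.union (Set.finite_singleton α)).subset hEsub
    have hFE : ↑F ⊆ Y ∩ Set.Icc t' emax := by
      intro w hw
      have hw' : w ∈ W ∩ Set.Iic emax := by rw [hFeq]; exact hw
      exact ⟨hWY hw'.1, le_trans (le_of_lt (lt_trans ht'α hαt)) hw'.1.2.1, hw'.2⟩
    have hge : N + 1 ≤ (Y ∩ Set.Icc t' emax).ncard := by
      have h1 := Set.ncard_le_ncard hFE hEfin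
      rwa [Set.ncard_coe_finset, hcard] at h1
    rcases hd with hd | hd
    · exact hd hEfin
    · omega

end Engine

section LemP
variable {R : Type*} (L : FirstOrder.Language) [L.Structure R] [LinearOrder R]
  [AddCommGroup R] [CovariantClass R R (· + ·) (· < ·)]

lemma fin_snoc_self {α : Type*} {n : ℕ} (w : Fin (n+1) → α) :
    Fin.snoc (w ∘ Fin.castSucc) (w (Fin.last n)) = w := by
  ext j
  refine Fin.lastCases ?_ ?_ j <;> simp

/-- The coded family `{(ε,t) | t ∈ T ε}` for
`T ε = {t | ∃ y, snoc y t ∈ S ∧ ∀ i, z i < y i + ε ∧ y i < z i + ε}`. -/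
lemma isDef_codedT (hlt : IsDefinable L {v : Fin 2 → R | v 0 < v 1})
    (hadd : IsDefinable L {v : Fin 3 → R | v 0 + v 1 = v 2})
    {k : ℕ} {S : Set (Fin (k+1) → R)} (hSdef : IsDefinable L S) (z : Fin k → R) :
    IsDefinable L {v : Fin 2 → R | ∃ y : Fin k → R,
      Fin.snoc y (v 1) ∈ S ∧ ∀ i, z i < y i + v 0 ∧ y i < z i + v 0} := by
  classical
  set e0 : Fin (2+k) := Fin.castAdd k 0 with he0
  set e1 : Fin (2+k) := Fin.castAdd k 1 with he1
  set yc : Fin k → Fin (2+k) := fun i => Fin.natAdd 2 i with hyc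
  set σ : Fin (k+1) → Fin (2+k) := Fin.snoc yc e1 with hσ
  have hbase : IsDefinable L {w : Fin (2+k) → R | w ∘ σ ∈ S} := isDef_reindex L σ hSdef
  have hC1 : ∀ i : Fin k, IsDefinable L {w : Fin (2+k) → R |
      ∃ u : R, u = w (yc i) + w e0 ∧ z i < u} := by
    intro i
    have hin : IsDefinable L ({x : Fin (2+k+1) → R |
        x ((yc i).castSucc) + x (e0.castSucc) = x (Fin.last (2+k))} ∩
        {x : Fin (2+k+1) → R | z i < x (Fin.last (2+k))}) :=
      isDef_inter L (isDef_addVar L hadd _ _ _) (isDef_constLt L hlt (z i) _)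
    refine isDef_congr L (isDef_exists_snoc L hin) ?_
    ext w
    simp only [Set.mem_setOf_eq, Set.mem_inter_iff, Fin.snoc_castSucc, Fin.snoc_last]
    constructor
    · rintro ⟨u, hu1, hu2⟩
      exact ⟨u, hu1.symm, hu2⟩
    · rintro ⟨u, hu1, hu2⟩
      exact ⟨u, hu1.symm, hu2⟩
  have hC2 : ∀ i : Fin k, IsDefinable L {w : Fin (2+k) → R |
      ∃ u : R, u + w e0 = w (yc i) ∧ u < z i} := by
    intro i
    have hin : IsDefinable L ({x : Fin (2+k+1) → R |
        x (Fin.last (2+k)) + x (e0.castSucc) = x ((yc i).castSucc)} ∩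
        {x : Fin (2+k+1) → R | x (Fin.last (2+k)) < z i}) :=
      isDef_inter L (isDef_addVar L hadd _ _ _) (isDef_ltConst L hlt _ (z i))
    refine isDef_congr L (isDef_exists_snoc L hin) ?_
    ext w
    simp only [Set.mem_setOf_eq, Set.mem_inter_iff, Fin.snoc_castSucc, Fin.snoc_last]
  have hmat : IsDefinable L ({w : Fin (2+k) → R | w ∘ σ ∈ S} ∩
      ⋂ i ∈ (Finset.univ : Finset (Fin k)),
        ({w : Fin (2+k) → R | ∃ u : R, u = w (yc i) + w e0 ∧ z i < u} ∩
         {w : Fin (2+k) → R | ∃ u : R, u + w e0 = w (yc i) ∧ u < z i})) :=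
    isDef_inter L hbase (Set.definable_biInter_finset
      (fun i => isDef_inter L (hC1 i) (hC2 i)) _)
  refine isDef_congr L (isDef_exists_append L k hmat) ?_
  ext v
  letI := lagOf R
  simp only [Set.mem_setOf_eq, Set.mem_inter_iff, Set.mem_iInter, Finset.mem_univ,
    forall_true_left]
  have hcomp : ∀ (y : Fin k → R), Fin.append v y ∘ σ = Fin.snoc y (v 1) := by
    intro y
    ext j
    refine Fin.lastCases ?_ ?_ j
    · simp [hσ, he1, Fin.append_left]
    · intro i
      simp [hσ, hyc, Fin.append_right]
  constructor
  · rintro ⟨y, hyS, hy⟩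
    refine ⟨y, ?_, fun i => ⟨⟨y i + v 0, ?_, ?_⟩, ⟨y i - v 0, ?_, ?_⟩⟩⟩
    · rw [hcomp]
      exact hyS
    · simp [hyc, he0, Fin.append_right, Fin.append_left]
    · exact (hy i).1
    · simp [hyc, he0, Fin.append_right, Fin.append_left, sub_add_cancel]
    · exact sub_lt_iff_lt_add.2 (hy i).2
  · rintro ⟨y, hyS, hy⟩
    refine ⟨y, ?_, fun i => ⟨?_, ?_⟩⟩
    · rw [hcomp] at hyS
      exact hyS
    · obtain ⟨u, hu1, hu2⟩ := (hy i).1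
      simp only [hyc, he0, Fin.append_right, Fin.append_left] at hu1
      rw [hu1] at hu2
      exact hu2
    · obtain ⟨u, hu1, hu2⟩ := (hy i).2
      simp only [hyc, he0, Fin.append_right, Fin.append_left] at hu1
      have hu3 : u = y i - v 0 := eq_sub_of_add_eq hu1
      rw [hu3] at hu2
      exact sub_lt_iff_lt_add.1 hu2

end LemP

section LemP2

/-- The auxiliary family of sets used in the projection argument. -/
def Tfam {R : Type*} [LT R] [Add R] {k : ℕ} (S : Set (Fin (k+1) → R)) (z : Fin k → R)
    (ε : R) : Set R :=
  {t | ∃ y : Fin k → R, Fin.snoc y t ∈ S ∧ ∀ i, z i < y i + ε ∧ y i < z i + ε}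

variable {R : Type*} (L : FirstOrder.Language) [L.Structure R] [LinearOrder R]
  [AddCommGroup R] [CovariantClass R R (· + ·) (· < ·)]

lemma isDef_TLUBcoded (hlt : IsDefinable L {v : Fin 2 → R | v 0 < v 1})
    (hadd : IsDefinable L {v : Fin 3 → R | v 0 + v 1 = v 2})
    {k : ℕ} {S : Set (Fin (k+1) → R)} (hSdef : IsDefinable L S) (z : Fin k → R) :
    IsDefinable L {v : Fin 2 → R | IsLUB (Tfam S z (v 0)) (v 1)} := by
  have hD2 : IsDefinable L {v : Fin 2 → R | v 1 ∈ Tfam S z (v 0)} :=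
    isDef_codedT L hlt hadd hSdef z
  have hT3 : IsDefinable L {w : Fin 3 → R | w 2 ∈ Tfam S z (w 0)} := by
    refine isDef_congr L (isDef_reindex L ![0,2] hD2) ?_
    ext w
    simp [Set.mem_setOf_eq, Function.comp]
  have hUB : IsDefinable L {v : Fin 2 → R | v 1 ∈ upperBounds (Tfam S z (v 0))} := by
    have hin := isDef_inter L hT3 (isDef_ltVar L hlt 1 2)
    refine isDef_congr L (isDef_compl L (isDef_exists_snoc L hin)) ?_
    ext v
    simp only [Set.mem_compl_iff, Set.mem_setOf_eq, Set.mem_inter_iff, not_exists, not_and,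
      Fin.isValue, snoc2_zero, snoc2_one, snoc2_two, upperBounds]
    constructor
    · intro hv t ht
      exact not_lt.2 (hv ht)
    · intro hv t ht
      exact not_lt.1 (hv t ht)
  have hUB3 : IsDefinable L {w : Fin 3 → R | w 2 ∈ upperBounds (Tfam S z (w 0))} := by
    refine isDef_congr L (isDef_reindex L ![0,2] hUB) ?_
    ext w
    simp [Set.mem_setOf_eq, Function.comp]
  have hmin : IsDefinable L {v : Fin 2 → R |
      ∀ u : R, u ∈ upperBounds (Tfam S z (v 0)) → v 1 ≤ u} := by
    have hin := isDef_inter L hUB3 (isDef_ltVar L hlt 2 1)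
    refine isDef_congr L (isDef_compl L (isDef_exists_snoc L hin)) ?_
    ext v
    simp only [Set.mem_compl_iff, Set.mem_setOf_eq, Set.mem_inter_iff, not_exists, not_and,
      Fin.isValue, snoc2_zero, snoc2_one, snoc2_two]
    constructor
    · intro hv u hu
      exact not_lt.2 (hv u hu)
    · intro hv u hu
      exact not_lt.1 (hv u hu)
  refine isDef_congr L (isDef_inter L hUB hmin) ?_
  ext v
  simp only [Set.mem_inter_iff, Set.mem_setOf_eq]
  constructor
  · intro h
    exact ⟨h.1, fun u hu => h.2 hu⟩
  · intro h
    exact ⟨h.1, fun u hu => h.2 u hu⟩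

lemma isDef_Acoded (hlt : IsDefinable L {v : Fin 2 → R | v 0 < v 1})
    (hadd : IsDefinable L {v : Fin 3 → R | v 0 + v 1 = v 2})
    {k : ℕ} {S : Set (Fin (k+1) → R)} (hSdef : IsDefinable L S) (z : Fin k → R) :
    IsDefinable L {v : Fin 1 → R | ∃ ε : R, 0 < ε ∧ IsLUB (Tfam S z ε) (v 0)} := by
  have hlub := isDef_TLUBcoded L hlt hadd hSdef z
  have hre : IsDefinable L {w : Fin 2 → R | IsLUB (Tfam S z (w 1)) (w 0)} := by
    refine isDef_congr L (isDef_reindex L ![1,0] hlub) ?_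
    ext w
    simp [Set.mem_setOf_eq, Function.comp]
  have hin := isDef_inter L hre (isDef_constLt L hlt (0 : R) 1)
  refine isDef_congr L (isDef_exists_snoc L hin) ?_
  ext v
  simp only [Set.mem_setOf_eq, Set.mem_inter_iff, Fin.isValue, snoc1_zero, snoc1_one]
  constructor
  · rintro ⟨ε, hε, hl⟩
    exact ⟨ε, hl, hε⟩
  · rintro ⟨ε, hl, hε⟩
    exact ⟨ε, hε, hl⟩

lemma isDef_Tsection (hlt : IsDefinable L {v : Fin 2 → R | v 0 < v 1})
    (hadd : IsDefinable L {v : Fin 3 → R | v 0 + v 1 = v 2})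
    {k : ℕ} {S : Set (Fin (k+1) → R)} (hSdef : IsDefinable L S) (z : Fin k → R) (ε₀ : R) :
    IsDefinable L {v : Fin 1 → R | v 0 ∈ Tfam S z ε₀} := by
  have hD2 : IsDefinable L {v : Fin 2 → R | v 1 ∈ Tfam S z (v 0)} :=
    isDef_codedT L hlt hadd hSdef z
  have hre : IsDefinable L {w : Fin 2 → R | w 0 ∈ Tfam S z (w 1)} := by
    refine isDef_congr L (isDef_reindex L ![1,0] hD2) ?_
    ext w
    simp [Set.mem_setOf_eq, Function.comp]
  have hin := isDef_inter L hre (isDef_eqConst L (1 : Fin 2) ε₀)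
  refine isDef_congr L (isDef_exists_snoc L hin) ?_
  ext v
  simp only [Set.mem_setOf_eq, Set.mem_inter_iff, Fin.isValue, snoc1_zero, snoc1_one]
  constructor
  · intro hv
    exact ⟨ε₀, hv, rfl⟩
  · rintro ⟨e, he, rfl⟩
    exact he

variable [TopologicalSpace R] [OrderTopology R] [NoMaxOrder R] [NoMinOrder R]

lemma lemP (hlt : IsDefinable L {v : Fin 2 → R | v 0 < v 1})
    (hadd : IsDefinable L {v : Fin 3 → R | v 0 + v 1 = v 2}) (hDC : DCProp L R)
    (hpos : ∃ g : R, 0 < g)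
    {k : ℕ} {S : Set (Fin (k+1) → R)} (hSdef : IsDefinable L S) {pbd qbd : R}
    (hbd : ∀ w ∈ S, pbd ≤ w (Fin.last k) ∧ w (Fin.last k) ≤ qbd)
    {z : Fin k → R}
    (hz : ∀ ε > (0:R), ∃ w ∈ S, ∀ i : Fin k,
      z i - ε < w (Fin.castSucc i) ∧ w (Fin.castSucc i) < z i + ε) :
    ∃ t : R, Fin.snoc z t ∈ closure S := by
  letI := lagOf R
  have hTne : ∀ ε > (0:R), (Tfam S z ε).Nonempty := by
    intro ε hε
    obtain ⟨w, hwS, hw⟩ := hz ε hε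
    refine ⟨w (Fin.last k), w ∘ Fin.castSucc, ?_, ?_⟩
    · rw [fin_snoc_self]
      exact hwS
    · intro i
      exact ⟨sub_lt_iff_lt_add.1 (hw i).1, (hw i).2⟩
  have hTbdd : ∀ ε : R, BddAbove (Tfam S z ε) := by
    intro ε
    refine ⟨qbd, ?_⟩
    rintro t ⟨y, hyS, _⟩
    have := (hbd _ hyS).2
    rwa [Fin.snoc_last] at this
  have hTlow : ∀ (ε : R), ∀ t ∈ Tfam S z ε, pbd ≤ t := by
    rintro ε t ⟨y, hyS, _⟩
    have := (hbd _ hyS).1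
    rwa [Fin.snoc_last] at this
  have hlub : ∀ ε > (0:R), ∃ s : R, IsLUB (Tfam S z ε) s := by
    intro ε hε
    exact dc_sup L hDC (isDef_Tsection L hlt hadd hSdef z ε) (hTne ε hε) (hTbdd ε)
  set A : Set R := {s | ∃ ε : R, 0 < ε ∧ IsLUB (Tfam S z ε) s} with hA
  have hAne : A.Nonempty := by
    obtain ⟨g, hg⟩ := hpos
    obtain ⟨s, hs⟩ := hlub g hg
    exact ⟨s, g, hg, hs⟩
  have hAbdd : BddBelow A := by
    refine ⟨pbd, ?_⟩
    rintro s ⟨ε, hε, hs⟩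
    obtain ⟨t, ht⟩ := hTne ε hε
    exact le_trans (hTlow ε t ht) (hs.1 ht)
  obtain ⟨tstar, htstar⟩ := dc_inf L hDC hlt (isDef_Acoded L hlt hadd hSdef z) hAne hAbdd
  have key : ∀ δ > (0:R), ∃ w ∈ S,
      (∀ i : Fin k, z i - δ < w (Fin.castSucc i) ∧ w (Fin.castSucc i) < z i + δ) ∧
      tstar - δ < w (Fin.last k) ∧ w (Fin.last k) < tstar + δ := by
    intro δ hδ
    have hsA : ∃ s ∈ A, s < tstar + δ := by
      by_contra hc
      push_neg at hc
      have : tstar + δ ∈ lowerBounds A := fun s hs => hc s hs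
      have h2 := htstar.2 this
      exact absurd h2 (not_le.2 (lt_add_of_pos_right _ hδ))
    obtain ⟨s, ⟨ε₁, hε₁, hslub⟩, hsδ⟩ := hsA
    have hε' : (0:R) < min ε₁ δ := lt_min hε₁ hδ
    obtain ⟨s', hs'⟩ := hlub (min ε₁ δ) hε'
    have hs'A : s' ∈ A := ⟨min ε₁ δ, hε', hs'⟩
    have hts' : tstar ≤ s' := htstar.1 hs'A
    have hsub : Tfam S z (min ε₁ δ) ⊆ Tfam S z ε₁ := by
      rintro t ⟨y, hyS, hy⟩
      refine ⟨y, hyS, fun i => ⟨?_, ?_⟩⟩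
      · exact lt_of_lt_of_le (hy i).1 (add_le_add_right (min_le_left _ _) _)
      · exact lt_of_lt_of_le (hy i).2 (add_le_add_right (min_le_left _ _) _)
    have hs's : s' ≤ s := hs'.2 fun t ht => hslub.1 (hsub ht)
    have ht₁ : ∃ t₁ ∈ Tfam S z (min ε₁ δ), s' - δ < t₁ := by
      by_contra hc
      push_neg at hc
      have : s' ≤ s' - δ := hs'.2 fun t ht => hc t ht
      exact absurd this (not_le.2 (sub_lt_self _ hδ))
    obtain ⟨t₁, ht₁T, ht₁gt⟩ := ht₁
    obtain ⟨y, hyS, hy⟩ := ht₁T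
    refine ⟨Fin.snoc y t₁, hyS, ?_, ?_, ?_⟩
    · intro i
      rw [Fin.snoc_castSucc]
      constructor
      · exact sub_lt_iff_lt_add.2 (lt_of_lt_of_le (hy i).1
          (add_le_add_right (min_le_right _ _) _))
      · exact lt_of_lt_of_le (hy i).2 (add_le_add_right (min_le_right _ _) _)
    · rw [Fin.snoc_last]
      exact lt_of_le_of_lt (sub_le_sub_right hts' δ) ht₁gt
    · rw [Fin.snoc_last]
      have ht₁s' : t₁ ≤ s' := hs'.1 ⟨y, hyS, hy⟩
      exact lt_of_le_of_lt ht₁s' (lt_of_le_of_lt hs's hsδ)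
  refine ⟨tstar, mem_closure_of_approx hpos ?_⟩
  intro ε hε
  obtain ⟨w, hwS, hw1, hw2, hw3⟩ := key ε hε
  refine ⟨w, hwS, fun j => ?_⟩
  refine Fin.lastCases ?_ ?_ j
  · rw [Fin.snoc_last]
    exact ⟨hw2, hw3⟩
  · intro i
    rw [Fin.snoc_castSucc]
    exact hw1 i

end LemP2

section Proj
variable {R : Type*} (L : FirstOrder.Language) [L.Structure R] [LinearOrder R]
  [AddCommGroup R] [CovariantClass R R (· + ·) (· < ·)]
  [TopologicalSpace R] [OrderTopology R] [NoMaxOrder R] [NoMinOrder R]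

lemma projFiber (hlt : IsDefinable L {v : Fin 2 → R | v 0 < v 1})
    (hadd : IsDefinable L {v : Fin 3 → R | v 0 + v 1 = v 2}) (hDC : DCProp L R)
    (hpos : ∃ g : R, 0 < g)
    {k : ℕ} {F : Set (Fin (k+1) → R)} (hFdef : IsDefinable L F)
    (hFcl : IsClosed F) (hFdisc : DiscreteSet F) {pbd qbd : R}
    (hbd : ∀ w ∈ F, pbd ≤ w (Fin.last k) ∧ w (Fin.last k) ≤ qbd) :
    IsClosed {y : Fin k → R | ∃ t, Fin.snoc y t ∈ F} ∧
      DiscreteSet {y : Fin k → R | ∃ t, Fin.snoc y t ∈ F} := by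
  letI := lagOf R
  constructor
  · have hsub : closure {y : Fin k → R | ∃ t, Fin.snoc y t ∈ F}
        ⊆ {y : Fin k → R | ∃ t, Fin.snoc y t ∈ F} := by
      intro z hz
      have happrox := approx_of_mem_closure hz
      have hz' : ∀ ε > (0:R), ∃ w ∈ F, ∀ i : Fin k,
          z i - ε < w (Fin.castSucc i) ∧ w (Fin.castSucc i) < z i + ε := by
        intro ε hε
        obtain ⟨y, ⟨t, hyt⟩, hy⟩ := happrox ε hε
        refine ⟨Fin.snoc y t, hyt, fun i => ?_⟩
        rw [Fin.snoc_castSucc]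
        exact hy i
      obtain ⟨t, ht⟩ := lemP L hlt hadd hDC hpos hFdef hbd hz'
      rw [hFcl.closure_eq] at ht
      exact ⟨t, ht⟩
    exact closure_subset_iff_isClosed.1 hsub
  · intro z hz
    by_contra hno
    push_neg at hno
    have haccum : ∀ ε > (0:R), ∃ y : Fin k → R,
        (∃ t, Fin.snoc y t ∈ F) ∧ y ≠ z ∧ ∀ i, z i - ε < y i ∧ y i < z i + ε := by
      intro ε hε
      have hbox : IsOpen {x : Fin k → R | ∀ i, z i - ε < x i ∧ x i < z i + ε} := isOpen_box _ _
      have hzbox : z ∈ {x : Fin k → R | ∀ i, z i - ε < x i ∧ x i < z i + ε} :=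
        fun i => ⟨sub_lt_self _ hε, lt_add_of_pos_right _ hε⟩
      have hne := hno _ hbox hzbox
      -- the intersection contains z but is not {z}
      have hzmem : z ∈ {x : Fin k → R | ∀ i, z i - ε < x i ∧ x i < z i + ε} ∩
          {y : Fin k → R | ∃ t, Fin.snoc y t ∈ F} := ⟨hzbox, hz⟩
      have : ∃ y ∈ {x : Fin k → R | ∀ i, z i - ε < x i ∧ x i < z i + ε} ∩
          {y : Fin k → R | ∃ t, Fin.snoc y t ∈ F}, y ≠ z := by
        by_contra hc
        push_neg at hc
        apply hne
        apply Set.Subset.antisymm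
        · intro y hy
          exact hc y hy
        · rintro y rfl
          exact hzmem
      obtain ⟨y, ⟨hybox, hyD⟩, hyne⟩ := this
      exact ⟨y, hyD, hyne, hybox⟩
    -- definable set F' of points of F whose base part differs from z
    classical
    have hF'def : IsDefinable L (F ∩ {w : Fin (k+1) → R |
        ¬ ∀ i : Fin k, w (Fin.castSucc i) = z i}) := by
      have hbox : IsDefinable L {w : Fin (k+1) → R | ∀ i : Fin k, w (Fin.castSucc i) = z i} := by
        have h1 := Set.definable_biInter_finset
          (fun i : Fin k => isDef_eqConst L (Fin.castSucc i) (z i)) Finset.univ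
        refine isDef_congr L h1 ?_
        ext w
        simp
      exact isDef_inter L hFdef (isDef_compl L hbox)
    have hbd' : ∀ w ∈ F ∩ {w : Fin (k+1) → R | ¬ ∀ i : Fin k, w (Fin.castSucc i) = z i},
        pbd ≤ w (Fin.last k) ∧ w (Fin.last k) ≤ qbd := fun w hw => hbd w hw.1
    have hz' : ∀ ε > (0:R), ∃ w ∈ F ∩ {w : Fin (k+1) → R |
        ¬ ∀ i : Fin k, w (Fin.castSucc i) = z i}, ∀ i : Fin k,
        z i - ε < w (Fin.castSucc i) ∧ w (Fin.castSucc i) < z i + ε := by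
      intro ε hε
      obtain ⟨y, ⟨t, hyt⟩, hyne, hybox⟩ := haccum ε hε
      refine ⟨Fin.snoc y t, ⟨hyt, ?_⟩, fun i => ?_⟩
      · intro hc
        apply hyne
        ext i
        have := hc i
        rwa [Fin.snoc_castSucc] at this
      · rw [Fin.snoc_castSucc]
        exact hybox i
    obtain ⟨t, ht⟩ := lemP L hlt hadd hDC hpos hF'def hbd' hz'
    have htF : Fin.snoc z t ∈ F := by
      have := closure_mono (Set.inter_subset_left : F ∩ _ ⊆ F) ht
      rwa [hFcl.closure_eq] at this
    obtain ⟨U, hU, hPU, hUF⟩ := hFdisc _ htF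
    obtain ⟨w, hwU, hwF', hwne⟩ := mem_closure_iff.1 ht U hU hPU
    have hwP : w = Fin.snoc z t := by
      have : w ∈ U ∩ F := ⟨hwU, hwF'⟩
      rw [hUF] at this
      exact this
    apply hwne
    intro i
    rw [hwP, Fin.snoc_castSucc]

end Proj

section Dset
variable {R : Type*} (L : FirstOrder.Language) [L.Structure R] [LinearOrder R]
  [AddCommGroup R] [CovariantClass R R (· + ·) (· < ·)]
  [TopologicalSpace R] [OrderTopology R] [NoMaxOrder R] [NoMinOrder R]

lemma isDef_Dset (hlt : IsDefinable L {v : Fin 2 → R | v 0 < v 1})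
    {m k : ℕ} {X : Set (Fin (m + (k+1)) → R)} (hX : IsDefinable L X)
    (p q : R) (c' d' : Fin k → R) :
    IsDefinable L {v : Fin (m+k) → R |
      (∀ i : Fin k, c' i ≤ v (Fin.natAdd m i) ∧ v (Fin.natAdd m i) ≤ d' i) ∧
      ∃ t : R, p ≤ t ∧ t ≤ q ∧ Fin.snoc v t ∈ X} := by
  classical
  have hbox : IsDefinable L {v : Fin (m+k) → R |
      ∀ i : Fin k, c' i ≤ v (Fin.natAdd m i) ∧ v (Fin.natAdd m i) ≤ d' i} := by
    have h1 := Set.definable_biInter_finset (fun i : Fin k =>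
      isDef_inter L (isDef_constLe L hlt (c' i) (Fin.natAdd m i))
        (isDef_leConst L hlt (Fin.natAdd m i) (d' i))) Finset.univ
    refine isDef_congr L h1 ?_
    ext v
    simp [Set.mem_iInter]
  have hX2 : IsDefinable L (X : Set (Fin ((m+k)+1) → R)) := hX
  have hinner : IsDefinable L ((X : Set (Fin ((m+k)+1) → R)) ∩
      ({w : Fin ((m+k)+1) → R | p ≤ w (Fin.last (m+k))} ∩
       {w : Fin ((m+k)+1) → R | w (Fin.last (m+k)) ≤ q})) :=
    isDef_inter L hX2 (isDef_inter L (isDef_constLe L hlt p _) (isDef_leConst L hlt _ q))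
  have hex := isDef_exists_snoc L hinner
  refine isDef_congr L (isDef_inter L hbox hex) ?_
  ext v
  simp only [Set.mem_inter_iff, Set.mem_setOf_eq]
  constructor
  · rintro ⟨h1, t, ht1, ht2, ht3⟩
    have e1 : (Fin.snoc v t : Fin ((m+k)+1) → R) (Fin.last (m+k)) = t := Fin.snoc_last _ _
    refine ⟨h1, t, ht3, ?_, ?_⟩
    · exact (e1.symm ▸ ht1 : p ≤ (Fin.snoc v t : Fin ((m+k)+1) → R) (Fin.last (m+k)))
    · exact (e1.symm ▸ ht2 : (Fin.snoc v t : Fin ((m+k)+1) → R) (Fin.last (m+k)) ≤ q)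
  · rintro ⟨h1, t, ht3, ht1, ht2⟩
    have e1 : (Fin.snoc v t : Fin ((m+k)+1) → R) (Fin.last (m+k)) = t := Fin.snoc_last _ _
    have ht1' : p ≤ t := by
      have h2 : p ≤ (Fin.snoc v t : Fin ((m+k)+1) → R) (Fin.last (m+k)) := ht1
      rwa [e1] at h2
    have ht2' : t ≤ q := by
      have h2 : (Fin.snoc v t : Fin ((m+k)+1) → R) (Fin.last (m+k)) ≤ q := ht2
      rwa [e1] at h2
    exact ⟨h1, t, ht1', ht2', ht3⟩

lemma Dset_fiber_eq {m k : ℕ} (X : Set (Fin (m + (k+1)) → R))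
    (p q : R) (c' d' : Fin k → R) (x : Fin m → R) :
    fiberN {v : Fin (m+k) → R |
      (∀ i : Fin k, c' i ≤ v (Fin.natAdd m i) ∧ v (Fin.natAdd m i) ≤ d' i) ∧
      ∃ t : R, p ≤ t ∧ t ≤ q ∧ Fin.snoc v t ∈ X} x
    = {y : Fin k → R | ∃ t : R, Fin.snoc y t ∈
        {w : Fin (k+1) → R |
          (∀ i : Fin k, c' i ≤ w (Fin.castSucc i) ∧ w (Fin.castSucc i) ≤ d' i) ∧
          p ≤ w (Fin.last k) ∧ w (Fin.last k) ≤ q ∧ w ∈ fiberN X x}} := by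
  ext y
  simp only [fiberN, Set.mem_setOf_eq, Fin.snoc_last, Fin.snoc_castSucc]
  constructor
  · rintro ⟨hbox, t, ht1, ht2, ht3⟩
    refine ⟨t, ?_, ht1, ht2, ?_⟩
    · intro i
      have := hbox i
      rwa [Fin.append_right] at this
    · show Fin.append x (Fin.snoc y t) ∈ X
      rwa [Fin.append_snoc]
  · rintro ⟨t, hbox, ht1, ht2, ht3⟩
    refine ⟨?_, t, ht1, ht2, ?_⟩
    · intro i
      rw [Fin.append_right]
      exact hbox i
    · have : Fin.append x (Fin.snoc y t) ∈ X := ht3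
      rwa [Fin.append_snoc] at this

lemma Dset_fiber_closed_discrete (hlt : IsDefinable L {v : Fin 2 → R | v 0 < v 1})
    (hadd : IsDefinable L {v : Fin 3 → R | v 0 + v 1 = v 2}) (hDC : DCProp L R)
    (hpos : ∃ g : R, 0 < g)
    {m k : ℕ} {X : Set (Fin (m + (k+1)) → R)} (hX : IsDefinable L X)
    (hfib : ∀ x : Fin m → R, IsClosed (fiberN X x) ∧ DiscreteSet (fiberN X x))
    (p q : R) (c' d' : Fin k → R) (x : Fin m → R) :
    IsClosed (fiberN {v : Fin (m+k) → R |
      (∀ i : Fin k, c' i ≤ v (Fin.natAdd m i) ∧ v (Fin.natAdd m i) ≤ d' i) ∧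
      ∃ t : R, p ≤ t ∧ t ≤ q ∧ Fin.snoc v t ∈ X} x) ∧
    DiscreteSet (fiberN {v : Fin (m+k) → R |
      (∀ i : Fin k, c' i ≤ v (Fin.natAdd m i) ∧ v (Fin.natAdd m i) ≤ d' i) ∧
      ∃ t : R, p ≤ t ∧ t ≤ q ∧ Fin.snoc v t ∈ X} x) := by
  rw [Dset_fiber_eq]
  set Fx : Set (Fin (k+1) → R) := {w : Fin (k+1) → R |
    (∀ i : Fin k, c' i ≤ w (Fin.castSucc i) ∧ w (Fin.castSucc i) ≤ d' i) ∧
    p ≤ w (Fin.last k) ∧ w (Fin.last k) ≤ q ∧ w ∈ fiberN X x} with hFx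
  have hFxdef : IsDefinable L Fx := by
    classical
    have hbox : IsDefinable L {w : Fin (k+1) → R |
        ∀ i : Fin k, c' i ≤ w (Fin.castSucc i) ∧ w (Fin.castSucc i) ≤ d' i} := by
      have h1 := Set.definable_biInter_finset (fun i : Fin k =>
        isDef_inter L (isDef_constLe L hlt (c' i) (Fin.castSucc i))
          (isDef_leConst L hlt (Fin.castSucc i) (d' i))) Finset.univ
      refine isDef_congr L h1 ?_
      ext w
      simp [Set.mem_iInter]
    have h2 := isDef_inter L hbox (isDef_inter L
      (isDef_inter L (isDef_constLe L hlt p (Fin.last k)) (isDef_leConst L hlt (Fin.last k) q))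
      (isDef_fiberN L hX x))
    refine isDef_congr L h2 ?_
    ext w
    simp only [hFx, Set.mem_inter_iff, Set.mem_setOf_eq]
    try tauto
  have hFxcl : IsClosed Fx := by
    have h1 : IsClosed {w : Fin (k+1) → R |
        ∀ i : Fin k, c' i ≤ w (Fin.castSucc i) ∧ w (Fin.castSucc i) ≤ d' i} := by
      have : {w : Fin (k+1) → R |
          ∀ i : Fin k, c' i ≤ w (Fin.castSucc i) ∧ w (Fin.castSucc i) ≤ d' i}
          = ⋂ i : Fin k, ((fun w : Fin (k+1) → R => w (Fin.castSucc i)) ⁻¹'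
            (Set.Icc (c' i) (d' i))) := by
        ext w
        simp [Set.mem_iInter, Set.mem_Icc]
      rw [this]
      exact isClosed_iInter fun i => IsClosed.preimage (continuous_apply _) isClosed_Icc
    have h2 : IsClosed {w : Fin (k+1) → R | p ≤ w (Fin.last k)} :=
      IsClosed.preimage (continuous_apply _) isClosed_Ici
    have h3 : IsClosed {w : Fin (k+1) → R | w (Fin.last k) ≤ q} :=
      IsClosed.preimage (continuous_apply _) isClosed_Iic
    have heq : Fx = {w : Fin (k+1) → R |
        ∀ i : Fin k, c' i ≤ w (Fin.castSucc i) ∧ w (Fin.castSucc i) ≤ d' i} ∩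
        ({w : Fin (k+1) → R | p ≤ w (Fin.last k)} ∩
         ({w : Fin (k+1) → R | w (Fin.last k) ≤ q} ∩ fiberN X x)) := by
      ext w
      simp only [hFx, Set.mem_inter_iff, Set.mem_setOf_eq]
      try tauto
    rw [heq]
    exact h1.inter (h2.inter (h3.inter (hfib x).1))
  have hFxdisc : DiscreteSet Fx := by
    refine DiscreteSet.mono ?_ (hfib x).2
    intro w hw
    exact hw.2.2.2
  have hbd : ∀ w ∈ Fx, p ≤ w (Fin.last k) ∧ w (Fin.last k) ≤ q :=
    fun w hw => ⟨hw.2.1, hw.2.2.1⟩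
  exact projFiber L hlt hadd hDC hpos hFxdef hFxcl hFxdisc hbd

end Dset

section Masters
variable {R : Type*} (L : FirstOrder.Language) [L.Structure R] [LinearOrder R]
  [DenselyOrdered R] [AddCommGroup R] [CovariantClass R R (· + ·) (· < ·)]
  [TopologicalSpace R] [OrderTopology R] [NoMaxOrder R] [NoMinOrder R]

lemma openBox_inter {n : ℕ} {U V : Set (Fin n → R)} (hU : OpenBox U) (hV : OpenBox V) :
    OpenBox (U ∩ V) := by
  obtain ⟨c1, d1, rfl⟩ := hU
  obtain ⟨c2, d2, rfl⟩ := hV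
  refine ⟨fun i => max (c1 i) (c2 i), fun i => min (d1 i) (d2 i), ?_⟩
  ext x
  simp only [Set.mem_inter_iff, Set.mem_setOf_eq, max_lt_iff, lt_min_iff]
  constructor
  · rintro ⟨h1, h2⟩
    exact fun i => ⟨⟨(h1 i).1, (h2 i).1⟩, ⟨(h1 i).2, (h2 i).2⟩⟩
  · intro h
    exact ⟨fun i => ⟨(h i).1.1, (h i).2.1⟩, fun i => ⟨(h i).1.2, (h i).2.2⟩⟩

lemma slice_closed_discrete {m k : ℕ} {X : Set (Fin (m + (k+1)) → R)}
    (hfib : ∀ x : Fin m → R, IsClosed (fiberN X x) ∧ DiscreteSet (fiberN X x))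
    (z : Fin (m+k) → R) :
    IsClosed (fiber1 (X : Set (Fin ((m+k)+1) → R)) z) ∧
      DiscreteSet (fiber1 (X : Set (Fin ((m+k)+1) → R)) z) := by
  set x : Fin m → R := fun i => z (Fin.castAdd k i) with hx
  set y' : Fin k → R := fun i => z (Fin.natAdd m i) with hy'
  have hzeq : Fin.append x y' = z := by
    ext j
    refine Fin.addCases (fun i => ?_) (fun i => ?_) j
    · rw [Fin.append_left]
    · rw [Fin.append_right]
  have heq : fiber1 (X : Set (Fin ((m+k)+1) → R)) z
      = (fun t : R => (Fin.snoc y' t : Fin (k+1) → R)) ⁻¹' (fiberN X x) := by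
    ext t
    show Fin.snoc z t ∈ X ↔ Fin.append x (Fin.snoc y' t) ∈ X
    rw [Fin.append_snoc, hzeq]
  constructor
  · rw [heq]
    exact IsClosed.preimage (continuous_snoc y') (hfib x).1
  · rw [heq]
    intro t ht
    obtain ⟨U, hU, htU, hUf⟩ := (hfib x).2 _ ht
    refine ⟨(fun t : R => (Fin.snoc y' t : Fin (k+1) → R)) ⁻¹' U,
      IsOpen.preimage (continuous_snoc y') hU, htU, ?_⟩
    ext t'
    constructor
    · rintro ⟨h1, h2⟩
      have : Fin.snoc y' t' ∈ U ∩ fiberN X x := ⟨h1, h2⟩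
      rw [hUf] at this
      have := congrFun this (Fin.last k)
      simpa using this
    · rintro rfl
      exact ⟨htU, ht⟩

lemma oracle2' (hlt : IsDefinable L {v : Fin 2 → R | v 0 < v 1}) (hDC : DCProp L R)
    (hLUF2 : LUF2 L R) {M : ℕ} {X : Set (Fin (M+1) → R)} (hX : IsDefinable L X)
    (hfib : ∀ z : Fin M → R, IsClosed (fiber1 X z) ∧ DiscreteSet (fiber1 X z))
    (α : R) (β : Fin M → R) :
    ∃ p q : R, p < α ∧ α < q ∧ ∃ U : Set (Fin M → R), OpenBox U ∧ β ∈ U ∧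
      ∀ z ∈ U, (fiber1 X z ∩ Set.Icc p q).Finite := by
  obtain ⟨N, hN, p, q, hint, U, hUbox, hβU, hdich⟩ := hLUF2 M X hX α β
  rw [interior_Icc] at hint
  refine ⟨p, q, hint.1, hint.2, U, hUbox, hβU, fun z hz => ?_⟩
  refine engine L hlt hDC (isDef_fiber1 L hX z) (hfib z).1 (hfib z).2 hint.1 hint.2 (N := N) ?_
  intro p' q' hp hpα hαq hq
  exact hdich z hz p' q' (by rw [interior_Icc]; exact ⟨hpα, hαq⟩) (Set.Icc_subset_Icc hp hq)

lemma master2 (hlt : IsDefinable L {v : Fin 2 → R | v 0 < v 1})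
    (hadd : IsDefinable L {v : Fin 3 → R | v 0 + v 1 = v 2}) (hDC : DCProp L R)
    (hLUF2 : LUF2 L R) (hpos : ∃ g : R, 0 < g) :
    ∀ (n m : ℕ) (X : Set (Fin (m + n) → R)), IsDefinable L X →
      (∀ x : Fin m → R, IsClosed (fiberN X x) ∧ DiscreteSet (fiberN X x)) →
      ∀ (b : Fin m → R) (a : Fin n → R),
        ∃ c d : Fin n → R, (∀ i, c i < a i ∧ a i < d i) ∧
          ∃ U : Set (Fin m → R), OpenBox U ∧ b ∈ U ∧
            ∀ x ∈ U, (fiberN X x ∩ {y | ∀ i, c i ≤ y i ∧ y i ≤ d i}).Finite := by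
  intro n
  induction n with
  | zero =>
    intro m X hX hfib b a
    obtain ⟨g, hg⟩ := hpos
    letI := lagOf R
    refine ⟨a, a, fun i => i.elim0, {x | ∀ i, b i - g < x i ∧ x i < b i + g},
      ⟨_, _, rfl⟩, fun i => ⟨sub_lt_self _ hg, lt_add_of_pos_right _ hg⟩, fun x _ => ?_⟩
    exact Set.Subsingleton.finite fun u _ v _ => funext fun i => i.elim0
  | succ k ih =>
    intro m X hX hfib b a
    letI := lagOf R
    set a' : Fin k → R := a ∘ Fin.castSucc with ha'
    set α : R := a (Fin.last k) with hα
    have hX' : IsDefinable L (X : Set (Fin ((m+k)+1) → R)) := hX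
    have hslice := slice_closed_discrete (X := X) hfib
    obtain ⟨p, q, hpα, hαq, U1, hU1box, hβU1, hfinO⟩ :=
      oracle2' L hlt hDC hLUF2 hX' hslice α (Fin.append b a')
    obtain ⟨c1, d1, hU1⟩ := hU1box
    rw [hU1] at hβU1
    have hbUx : b ∈ {x : Fin m → R | ∀ i, c1 (Fin.castAdd k i) < x i ∧ x i < d1 (Fin.castAdd k i)} := by
      intro i
      have := hβU1 (Fin.castAdd k i)
      rwa [Fin.append_left] at this
    have hy1 : ∀ i : Fin k, ∃ ci, c1 (Fin.natAdd m i) < ci ∧ ci < a' i := by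
      intro i
      have := hβU1 (Fin.natAdd m i)
      rw [Fin.append_right] at this
      exact exists_between this.1
    have hy2 : ∀ i : Fin k, ∃ di, a' i < di ∧ di < d1 (Fin.natAdd m i) := by
      intro i
      have := hβU1 (Fin.natAdd m i)
      rw [Fin.append_right] at this
      exact exists_between this.2
    choose c' hc'1 hc'2 using hy1
    choose d' hd'1 hd'2 using hy2
    set D : Set (Fin (m+k) → R) := {v : Fin (m+k) → R |
      (∀ i : Fin k, c' i ≤ v (Fin.natAdd m i) ∧ v (Fin.natAdd m i) ≤ d' i) ∧
      ∃ t : R, p ≤ t ∧ t ≤ q ∧ Fin.snoc v t ∈ X} with hD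
    have hDdef : IsDefinable L D := isDef_Dset L hlt hX p q c' d'
    have hDfib : ∀ x : Fin m → R, IsClosed (fiberN D x) ∧ DiscreteSet (fiberN D x) :=
      Dset_fiber_closed_discrete L hlt hadd hDC hpos hX hfib p q c' d'
    obtain ⟨c2, d2, hcd2, U2, hU2box, hbU2, hfin2⟩ := ih m D hDdef hDfib b a'
    refine ⟨Fin.snoc (fun i => max (c' i) (c2 i)) p, Fin.snoc (fun i => min (d' i) (d2 i)) q,
      ?_, {x : Fin m → R | ∀ i, c1 (Fin.castAdd k i) < x i ∧ x i < d1 (Fin.castAdd k i)} ∩ U2,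
      openBox_inter ⟨_, _, rfl⟩ hU2box, ⟨hbUx, hbU2⟩, ?_⟩
    · intro j
      refine Fin.lastCases ?_ (fun i => ?_) j
      · rw [Fin.snoc_last, Fin.snoc_last]
        exact ⟨hpα, hαq⟩
      · rw [Fin.snoc_castSucc, Fin.snoc_castSucc]
        exact ⟨max_lt (hc'2 i) (hcd2 i).1, lt_min (hd'1 i) (hcd2 i).2⟩
    · rintro x ⟨hxUx, hxU2⟩
      have hDfin := hfin2 x hxU2
      refine Set.Finite.subset (Set.Finite.biUnion hDfin (fun y' hy' =>
        Set.Finite.image (fun t => (Fin.snoc y' t : Fin (k+1) → R))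
          (hfinO (Fin.append x y') ?_))) ?_
      · -- append x y' ∈ U1
        rw [hU1]
        intro j
        refine Fin.addCases (fun i => ?_) (fun i => ?_) j
        · rw [Fin.append_left]
          exact hxUx i
        · rw [Fin.append_right]
          have hbox := (hy'.1 : Fin.append x y' ∈ D).1 i
          rw [Fin.append_right] at hbox
          exact ⟨lt_of_lt_of_le (hc'1 i) hbox.1, lt_of_le_of_lt hbox.2 (hd'2 i)⟩
      · -- the subset inclusion
        rintro y ⟨hyX, hyB⟩
        have hsn : Fin.snoc (y ∘ Fin.castSucc) (y (Fin.last k)) = y := fin_snoc_self y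
        have hlastB := hyB (Fin.last k)
        rw [Fin.snoc_last, Fin.snoc_last] at hlastB
        have hcsB : ∀ i : Fin k, max (c' i) (c2 i) ≤ y (Fin.castSucc i) ∧
            y (Fin.castSucc i) ≤ min (d' i) (d2 i) := by
          intro i
          have := hyB (Fin.castSucc i)
          rwa [Fin.snoc_castSucc, Fin.snoc_castSucc] at this
        have hyD : (y ∘ Fin.castSucc) ∈ fiberN D x := by
          refine ⟨fun i => ?_, y (Fin.last k), hlastB.1, hlastB.2, ?_⟩
          · rw [Fin.append_right]
            exact ⟨le_trans (le_max_left _ _) (hcsB i).1,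
              le_trans (hcsB i).2 (min_le_left _ _)⟩
          · show Fin.snoc (Fin.append x (y ∘ Fin.castSucc)) (y (Fin.last k)) ∈ X
            rw [← Fin.append_snoc, hsn]
            exact hyX
        have hyBox2 : (y ∘ Fin.castSucc) ∈ {w : Fin k → R | ∀ i, c2 i ≤ w i ∧ w i ≤ d2 i} := by
          intro i
          exact ⟨le_trans (le_max_right _ _) (hcsB i).1, le_trans (hcsB i).2 (min_le_right _ _)⟩
        refine Set.mem_biUnion ⟨hyD, hyBox2⟩ ?_
        refine ⟨y (Fin.last k), ⟨?_, hlastB.1, hlastB.2⟩, hsn⟩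
        show Fin.snoc (Fin.append x (y ∘ Fin.castSucc)) (y (Fin.last k)) ∈ X
        rw [← Fin.append_snoc, hsn]
        exact hyX

end Masters

section Masters2
variable {R : Type*} (L : FirstOrder.Language) [L.Structure R] [LinearOrder R]
  [DenselyOrdered R] [AddCommGroup R] [CovariantClass R R (· + ·) (· < ·)]
  [TopologicalSpace R] [OrderTopology R] [NoMaxOrder R] [NoMinOrder R]

lemma oracle1' (hlt : IsDefinable L {v : Fin 2 → R | v 0 < v 1}) (hDC : DCProp L R)
    (hLUF1 : LUF1 L R) {M : ℕ} {X : Set (Fin (M+1) → R)} (hX : IsDefinable L X)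
    (hfib : ∀ z : Fin M → R, IsClosed (fiber1 X z) ∧ DiscreteSet (fiber1 X z)) (α : R) :
    ∃ p q : R, p < α ∧ α < q ∧ ∀ z : Fin M → R, (fiber1 X z ∩ Set.Icc p q).Finite := by
  obtain ⟨N, hN, p, q, hint, hdich⟩ := hLUF1 M X hX α
  rw [interior_Icc] at hint
  refine ⟨p, q, hint.1, hint.2, fun z => ?_⟩
  refine engine L hlt hDC (isDef_fiber1 L hX z) (hfib z).1 (hfib z).2 hint.1 hint.2 (N := N) ?_
  intro p' q' hp hpα hαq hq
  exact hdich z p' q' (by rw [interior_Icc]; exact ⟨hpα, hαq⟩) (Set.Icc_subset_Icc hp hq)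

lemma oracleS' (hlt : IsDefinable L {v : Fin 2 → R | v 0 < v 1}) (hDC : DCProp L R)
    (hSLUF : SLUF L R) (α : R) :
    ∃ p q : R, p < α ∧ α < q ∧ ∀ (M : ℕ) (X : Set (Fin (M+1) → R)), IsDefinable L X →
      (∀ z : Fin M → R, IsClosed (fiber1 X z) ∧ DiscreteSet (fiber1 X z)) →
      ∀ z : Fin M → R, (fiber1 X z ∩ Set.Icc p q).Finite := by
  obtain ⟨p, q, hint, h⟩ := hSLUF α
  rw [interior_Icc] at hint
  refine ⟨p, q, hint.1, hint.2, fun M X hX hfib z => ?_⟩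
  obtain ⟨N, hN, hdich⟩ := h M X hX
  refine engine L hlt hDC (isDef_fiber1 L hX z) (hfib z).1 (hfib z).2 hint.1 hint.2 (N := N) ?_
  intro p' q' hp hpα hαq hq
  exact hdich z p' q' (by rw [interior_Icc]; exact ⟨hpα, hαq⟩) (Set.Icc_subset_Icc hp hq)

lemma master1 (hlt : IsDefinable L {v : Fin 2 → R | v 0 < v 1})
    (hadd : IsDefinable L {v : Fin 3 → R | v 0 + v 1 = v 2}) (hDC : DCProp L R)
    (hLUF1 : LUF1 L R) (hpos : ∃ g : R, 0 < g) :
    ∀ (n m : ℕ) (X : Set (Fin (m + n) → R)), IsDefinable L X →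
      (∀ x : Fin m → R, IsClosed (fiberN X x) ∧ DiscreteSet (fiberN X x)) →
      ∀ a : Fin n → R,
        ∃ c d : Fin n → R, (∀ i, c i < a i ∧ a i < d i) ∧
          ∀ x : Fin m → R, (fiberN X x ∩ {y | ∀ i, c i ≤ y i ∧ y i ≤ d i}).Finite := by
  intro n
  induction n with
  | zero =>
    intro m X hX hfib a
    refine ⟨a, a, fun i => i.elim0, fun x => ?_⟩
    exact Set.Subsingleton.finite fun u _ v _ => funext fun i => i.elim0
  | succ k ih =>
    intro m X hX hfib a
    letI := lagOf R
    obtain ⟨g, hg⟩ := id hpos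
    set a' : Fin k → R := a ∘ Fin.castSucc with ha'
    set α : R := a (Fin.last k) with hα
    have hX' : IsDefinable L (X : Set (Fin ((m+k)+1) → R)) := hX
    have hslice := slice_closed_discrete (X := X) hfib
    obtain ⟨p, q, hpα, hαq, hfinO⟩ := oracle1' L hlt hDC hLUF1 hX' hslice α
    set c' : Fin k → R := fun i => a' i - g with hc'
    set d' : Fin k → R := fun i => a' i + g with hd'
    have hc'2 : ∀ i, c' i < a' i := fun i => sub_lt_self _ hg
    have hd'1 : ∀ i, a' i < d' i := fun i => lt_add_of_pos_right _ hg
    set D : Set (Fin (m+k) → R) := {v : Fin (m+k) → R |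
      (∀ i : Fin k, c' i ≤ v (Fin.natAdd m i) ∧ v (Fin.natAdd m i) ≤ d' i) ∧
      ∃ t : R, p ≤ t ∧ t ≤ q ∧ Fin.snoc v t ∈ X} with hD
    have hDdef : IsDefinable L D := isDef_Dset L hlt hX p q c' d'
    have hDfib : ∀ x : Fin m → R, IsClosed (fiberN D x) ∧ DiscreteSet (fiberN D x) :=
      Dset_fiber_closed_discrete L hlt hadd hDC hpos hX hfib p q c' d'
    obtain ⟨c2, d2, hcd2, hfin2⟩ := ih m D hDdef hDfib a'
    refine ⟨Fin.snoc (fun i => max (c' i) (c2 i)) p, Fin.snoc (fun i => min (d' i) (d2 i)) q,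
      ?_, ?_⟩
    · intro j
      refine Fin.lastCases ?_ (fun i => ?_) j
      · rw [Fin.snoc_last, Fin.snoc_last]
        exact ⟨hpα, hαq⟩
      · rw [Fin.snoc_castSucc, Fin.snoc_castSucc]
        exact ⟨max_lt (hc'2 i) (hcd2 i).1, lt_min (hd'1 i) (hcd2 i).2⟩
    · intro x
      have hDfin := hfin2 x
      refine Set.Finite.subset (Set.Finite.biUnion hDfin (fun y' hy' =>
        Set.Finite.image (fun t => (Fin.snoc y' t : Fin (k+1) → R))
          (hfinO (Fin.append x y')))) ?_
      rintro y ⟨hyX, hyB⟩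
      have hsn : Fin.snoc (y ∘ Fin.castSucc) (y (Fin.last k)) = y := fin_snoc_self y
      have hlastB := hyB (Fin.last k)
      rw [Fin.snoc_last, Fin.snoc_last] at hlastB
      have hcsB : ∀ i : Fin k, max (c' i) (c2 i) ≤ y (Fin.castSucc i) ∧
          y (Fin.castSucc i) ≤ min (d' i) (d2 i) := by
        intro i
        have := hyB (Fin.castSucc i)
        rwa [Fin.snoc_castSucc, Fin.snoc_castSucc] at this
      have hyD : (y ∘ Fin.castSucc) ∈ fiberN D x := by
        refine ⟨fun i => ?_, y (Fin.last k), hlastB.1, hlastB.2, ?_⟩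
        · rw [Fin.append_right]
          exact ⟨le_trans (le_max_left _ _) (hcsB i).1,
            le_trans (hcsB i).2 (min_le_left _ _)⟩
        · show Fin.snoc (Fin.append x (y ∘ Fin.castSucc)) (y (Fin.last k)) ∈ X
          rw [← Fin.append_snoc, hsn]
          exact hyX
      have hyBox2 : (y ∘ Fin.castSucc) ∈ {w : Fin k → R | ∀ i, c2 i ≤ w i ∧ w i ≤ d2 i} := by
        intro i
        exact ⟨le_trans (le_max_right _ _) (hcsB i).1, le_trans (hcsB i).2 (min_le_right _ _)⟩
      refine Set.mem_biUnion ⟨hyD, hyBox2⟩ ?_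
      refine ⟨y (Fin.last k), ⟨?_, hlastB.1, hlastB.2⟩, hsn⟩
      show Fin.snoc (Fin.append x (y ∘ Fin.castSucc)) (y (Fin.last k)) ∈ X
      rw [← Fin.append_snoc, hsn]
      exact hyX

lemma masterS (hlt : IsDefinable L {v : Fin 2 → R | v 0 < v 1})
    (hadd : IsDefinable L {v : Fin 3 → R | v 0 + v 1 = v 2}) (hDC : DCProp L R)
    (hSLUF : SLUF L R) (hpos : ∃ g : R, 0 < g) :
    ∀ (n : ℕ) (a : Fin n → R),
      ∃ c d : Fin n → R, (∀ i, c i < a i ∧ a i < d i) ∧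
        ∀ (m : ℕ) (X : Set (Fin (m + n) → R)), IsDefinable L X →
          (∀ x : Fin m → R, IsClosed (fiberN X x) ∧ DiscreteSet (fiberN X x)) →
          ∀ x : Fin m → R, (fiberN X x ∩ {y | ∀ i, c i ≤ y i ∧ y i ≤ d i}).Finite := by
  intro n
  induction n with
  | zero =>
    intro a
    refine ⟨a, a, fun i => i.elim0, fun m X hX hfib x => ?_⟩
    exact Set.Subsingleton.finite fun u _ v _ => funext fun i => i.elim0
  | succ k ih =>
    intro a
    letI := lagOf R
    obtain ⟨g, hg⟩ := id hpos
    set a' : Fin k → R := a ∘ Fin.castSucc with ha'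
    set α : R := a (Fin.last k) with hα
    obtain ⟨p, q, hpα, hαq, hfinO⟩ := oracleS' L hlt hDC hSLUF α
    set c' : Fin k → R := fun i => a' i - g with hc'
    set d' : Fin k → R := fun i => a' i + g with hd'
    have hc'2 : ∀ i, c' i < a' i := fun i => sub_lt_self _ hg
    have hd'1 : ∀ i, a' i < d' i := fun i => lt_add_of_pos_right _ hg
    obtain ⟨c2, d2, hcd2, hfin2⟩ := ih a'
    refine ⟨Fin.snoc (fun i => max (c' i) (c2 i)) p, Fin.snoc (fun i => min (d' i) (d2 i)) q,
      ?_, ?_⟩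
    · intro j
      refine Fin.lastCases ?_ (fun i => ?_) j
      · rw [Fin.snoc_last, Fin.snoc_last]
        exact ⟨hpα, hαq⟩
      · rw [Fin.snoc_castSucc, Fin.snoc_castSucc]
        exact ⟨max_lt (hc'2 i) (hcd2 i).1, lt_min (hd'1 i) (hcd2 i).2⟩
    · intro m X hX hfib x
      have hX' : IsDefinable L (X : Set (Fin ((m+k)+1) → R)) := hX
      have hslice := slice_closed_discrete (X := X) hfib
      set D : Set (Fin (m+k) → R) := {v : Fin (m+k) → R |
        (∀ i : Fin k, c' i ≤ v (Fin.natAdd m i) ∧ v (Fin.natAdd m i) ≤ d' i) ∧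
        ∃ t : R, p ≤ t ∧ t ≤ q ∧ Fin.snoc v t ∈ X} with hD
      have hDdef : IsDefinable L D := isDef_Dset L hlt hX p q c' d'
      have hDfib : ∀ x : Fin m → R, IsClosed (fiberN D x) ∧ DiscreteSet (fiberN D x) :=
        Dset_fiber_closed_discrete L hlt hadd hDC hpos hX hfib p q c' d'
      have hDfin := hfin2 m D hDdef hDfib x
      refine Set.Finite.subset (Set.Finite.biUnion hDfin (fun y' hy' =>
        Set.Finite.image (fun t => (Fin.snoc y' t : Fin (k+1) → R))
          (hfinO (m+k) (X : Set (Fin ((m+k)+1) → R)) hX' hslice (Fin.append x y')))) ?_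
      rintro y ⟨hyX, hyB⟩
      have hsn : Fin.snoc (y ∘ Fin.castSucc) (y (Fin.last k)) = y := fin_snoc_self y
      have hlastB := hyB (Fin.last k)
      rw [Fin.snoc_last, Fin.snoc_last] at hlastB
      have hcsB : ∀ i : Fin k, max (c' i) (c2 i) ≤ y (Fin.castSucc i) ∧
          y (Fin.castSucc i) ≤ min (d' i) (d2 i) := by
        intro i
        have := hyB (Fin.castSucc i)
        rwa [Fin.snoc_castSucc, Fin.snoc_castSucc] at this
      have hyD : (y ∘ Fin.castSucc) ∈ fiberN D x := by
        refine ⟨fun i => ?_, y (Fin.last k), hlastB.1, hlastB.2, ?_⟩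
        · rw [Fin.append_right]
          exact ⟨le_trans (le_max_left _ _) (hcsB i).1,
            le_trans (hcsB i).2 (min_le_left _ _)⟩
        · show Fin.snoc (Fin.append x (y ∘ Fin.castSucc)) (y (Fin.last k)) ∈ X
          rw [← Fin.append_snoc, hsn]
          exact hyX
      have hyBox2 : (y ∘ Fin.castSucc) ∈ {w : Fin k → R | ∀ i, c2 i ≤ w i ∧ w i ≤ d2 i} := by
        intro i
        exact ⟨le_trans (le_max_right _ _) (hcsB i).1, le_trans (hcsB i).2 (min_le_right _ _)⟩
      refine Set.mem_biUnion ⟨hyD, hyBox2⟩ ?_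
      refine ⟨y (Fin.last k), ⟨?_, hlastB.1, hlastB.2⟩, hsn⟩
      show Fin.snoc (Fin.append x (y ∘ Fin.castSucc)) (y (Fin.last k)) ∈ X
      rw [← Fin.append_snoc, hsn]
      exact hyX

end Masters2
/-- (Fibers which are closed and discrete are uniformly locally finite,
with the `LUF₁` and `SLUF` refinements.) Let `𝓡` be a definably complete expansion of a
densely linearly ordered abelian group satisfying `LUF₂`, and let `X ⊆ R^{m+n}` be
definable with every fiber `X_x` closed and discrete. For every `(b,a) ∈ R^m × R^n`
there are a closed box `B ⊆ R^n` with `a ∈ int(B)` and an open box `U ∋ b` such that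
`X_x ∩ B` is finite for every `x ∈ U`. Moreover `U` can be taken to be `R^m` if
`𝓡 ⊨ LUF₁`, and `B` can be taken independently of `X` if `𝓡 ⊨ SLUF`. -/
theorem closed_discrete_fibers_locally_uniformly_finite
    {R : Type*} (L : FirstOrder.Language) [L.Structure R]
    [LinearOrder R] [DenselyOrdered R] [AddCommGroup R]
    [CovariantClass R R (· + ·) (· < ·)] [TopologicalSpace R] [OrderTopology R]
    (hlt : IsDefinable L {v : Fin 2 → R | v 0 < v 1})
    (hadd : IsDefinable L {v : Fin 3 → R | v 0 + v 1 = v 2})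
    (hDC : DCProp L R) (hLUF2 : LUF2 L R) :
    (∀ (m n : ℕ) (X : Set (Fin (m + n) → R)), IsDefinable L X →
      (∀ x : Fin m → R, IsClosed (fiberN X x) ∧ DiscreteSet (fiberN X x)) →
      ∀ (b : Fin m → R) (a : Fin n → R),
        ∃ B : Set (Fin n → R), ClosedBox B ∧ a ∈ interior B ∧
          ∃ U : Set (Fin m → R), OpenBox U ∧ b ∈ U ∧
            ∀ x ∈ U, (fiberN X x ∩ B).Finite) ∧
    (LUF1 L R → ∀ (m n : ℕ) (X : Set (Fin (m + n) → R)), IsDefinable L X →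
      (∀ x : Fin m → R, IsClosed (fiberN X x) ∧ DiscreteSet (fiberN X x)) →
      ∀ a : Fin n → R,
        ∃ B : Set (Fin n → R), ClosedBox B ∧ a ∈ interior B ∧
          ∀ x : Fin m → R, (fiberN X x ∩ B).Finite) ∧
    (SLUF L R → ∀ (n : ℕ) (a : Fin n → R),
      ∃ B : Set (Fin n → R), ClosedBox B ∧ a ∈ interior B ∧
        ∀ (m : ℕ) (X : Set (Fin (m + n) → R)), IsDefinable L X →
          (∀ x : Fin m → R, IsClosed (fiberN X x) ∧ DiscreteSet (fiberN X x)) →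
          ∀ x : Fin m → R, (fiberN X x ∩ B).Finite) := by
  rcases subsingleton_or_nontrivial R with hsub | hnt
  · -- degenerate case: LUF2 is contradictory over a subsingleton group
    exfalso
    obtain ⟨N, hN, p, q, hint, U, hUbox, hbU, _⟩ :=
      hLUF2 1 Set.univ Set.definable_univ 0 (fun _ => (0:R))
    obtain ⟨c, d, rfl⟩ := hUbox
    have h1 := (hbU 0).1
    have h0 : c 0 = (fun _ : Fin 1 => (0:R)) 0 := Subsingleton.elim _ _
    rw [h0] at h1
    exact lt_irrefl _ h1
  · haveI := noMaxOrder_of_nontrivial R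
    haveI := noMinOrder_of_nontrivial R
    have hpos := exists_pos_of_nontrivial R
    have hintmem : ∀ (n : ℕ) (c d a : Fin n → R), (∀ i, c i < a i ∧ a i < d i) →
        a ∈ interior {y : Fin n → R | ∀ i, c i ≤ y i ∧ y i ≤ d i} := by
      intro n c d a hcd
      have hsub : {x : Fin n → R | ∀ i, c i < x i ∧ x i < d i} ⊆
          interior {y : Fin n → R | ∀ i, c i ≤ y i ∧ y i ≤ d i} :=
        interior_maximal (fun x hx i => ⟨(hx i).1.le, (hx i).2.le⟩) (isOpen_box c d)
      exact hsub fun i => hcd i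
    refine ⟨?_, ?_, ?_⟩
    · intro m n X hX hfib b a
      obtain ⟨c, d, hcd, U, hUbox, hbU, hfin⟩ :=
        master2 L hlt hadd hDC hLUF2 hpos n m X hX hfib b a
      exact ⟨{y | ∀ i, c i ≤ y i ∧ y i ≤ d i}, ⟨c, d, rfl⟩, hintmem n c d a hcd,
        U, hUbox, hbU, hfin⟩
    · intro hLUF1 m n X hX hfib a
      obtain ⟨c, d, hcd, hfin⟩ := master1 L hlt hadd hDC hLUF1 hpos n m X hX hfib a
      exact ⟨{y | ∀ i, c i ≤ y i ∧ y i ≤ d i}, ⟨c, d, rfl⟩, hintmem n c d a hcd, hfin⟩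
    · intro hSLUF n a
      obtain ⟨c, d, hcd, hfin⟩ := masterS L hlt hadd hDC hSLUF hpos n a
      exact ⟨{y | ∀ i, c i ≤ y i ∧ y i ≤ d i}, ⟨c, d, rfl⟩, hintmem n c d a hcd, hfin⟩
end
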